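/- arXiv:1102.2849 — 4 statements merged into one kernel-verified Lean document; each statement's English description precedes it below -/
import Mathlib

section
/- Let k ∈ ℕ and let ψ : [0,∞)^k → ℝ be bounded and continuous. Then for every t > 0, the simplex Riemann sums (1/n^k) Σ_{0 ≤ r₁ < r₂ < ⋯ < r_k ≤ ⌊nt⌋−1} ψ(r₁/n, …, r_k/n) converge, as n → ∞, to the iterated simplex integral ∫₀^t ds_k ∫₀^{s_k} ds_{k−1} ⋯ ∫₀^{s₂} ds₁ ψ(s₁,…,s_k). -/
open MeasureTheory Filter Topology

private lemma mem_cell_iff {n r : ℕ} (hn : 0 < n) (x : ℝ) :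
    x ∈ Set.Ico ((r:ℝ)/n) (((r:ℝ)+1)/n) ↔ 0 ≤ x ∧ ⌊(n:ℝ) * x⌋₊ = r := by
  have hn' : (0:ℝ) < n := by exact_mod_cast hn
  rw [Set.mem_Ico, div_le_iff₀ hn', lt_div_iff₀ hn']
  constructor
  · rintro ⟨h1, h2⟩
    have hr : (0:ℝ) ≤ r := Nat.cast_nonneg r
    have hx : 0 ≤ x := by nlinarith
    refine ⟨hx, ?_⟩
    rw [Nat.floor_eq_iff (by positivity)]
    constructor <;> nlinarith
  · rintro ⟨hx, rfl⟩
    have h1 := Nat.floor_le (by positivity : (0:ℝ) ≤ (n:ℝ) * x)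
    have h2 := Nat.lt_floor_add_one ((n:ℝ)*x)
    constructor <;> nlinarith

/-- For a bounded continuous `ψ : [0,∞)^k → ℝ` and `t > 0`, the simplex
Riemann sums `(1/n^k) Σ_{0 ≤ r₁ < ⋯ < r_k ≤ ⌊nt⌋-1} ψ(r/n)` converge to the Lebesgue
integral of `ψ` over the ordered simplex `{0 < s₁ < ⋯ < s_k < t}`. -/
theorem simplex_riemann_sum_tendsto (k : ℕ) (hk : 1 ≤ k)
    (ψ : (Fin k → NNReal) → ℝ)
    (hcont : Continuous ψ)
    (C : ℝ) (hbdd : ∀ s, |ψ s| ≤ C)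
    (t : ℝ) (ht : 0 < t) :
    Tendsto (fun n : ℕ =>
        (1 / (n : ℝ) ^ k) *
          ∑ r ∈ Finset.univ.filter
              (fun r : Fin k → Fin (⌊(n : ℝ) * t⌋₊) => ∀ i j : Fin k, i < j → r i < r j),
            ψ (fun i => Real.toNNReal (((r i : ℕ) : ℝ) / n)))
      atTop
      (𝓝 (∫ s in {s : Fin k → ℝ | (∀ i j : Fin k, i < j → s i < s j) ∧
            ∀ i, s i ∈ Set.Ioo 0 t}, ψ (fun i => Real.toNNReal (s i)))) := by
  classical
  set A : Set (Fin k → ℝ) := {s | (∀ i j : Fin k, i < j → s i < s j) ∧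
      ∀ i, s i ∈ Set.Ioo 0 t} with hA
  have hAmeas : MeasurableSet A := by
    have : A = (⋂ i, ⋂ j, ⋂ (_ : i < j), {s : Fin k → ℝ | s i < s j}) ∩
        ⋂ i, ((fun s : Fin k → ℝ => s i) ⁻¹' Set.Ioo 0 t) := by
      ext s
      simp only [hA, Set.mem_setOf_eq, Set.mem_inter_iff, Set.mem_iInter, Set.mem_preimage]
    rw [this]
    exact (MeasurableSet.iInter fun i => MeasurableSet.iInter fun j => MeasurableSet.iInter
      fun _ => measurableSet_lt (measurable_pi_apply i) (measurable_pi_apply j)).inter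
      (MeasurableSet.iInter fun i => (measurable_pi_apply i) measurableSet_Ioo)
  set F : ℕ → (Fin k → ℝ) → ℝ := fun n s =>
    if (∀ i, 0 ≤ s i) ∧ (∀ i, ⌊(n:ℝ) * s i⌋₊ < ⌊(n:ℝ) * t⌋₊) ∧
        (∀ i j : Fin k, i < j → ⌊(n:ℝ) * s i⌋₊ < ⌊(n:ℝ) * s j⌋₊)
      then ψ (fun i => Real.toNNReal ((⌊(n:ℝ) * s i⌋₊ : ℝ) / n)) else 0
    with hF
  -- step function representation
  have hrep : ∀ (n : ℕ), 1 ≤ n → ∀ s : Fin k → ℝ,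
      (∑ r ∈ Finset.univ.filter
          (fun r : Fin k → Fin (⌊(n : ℝ) * t⌋₊) => ∀ i j : Fin k, i < j → r i < r j),
        Set.indicator (Set.univ.pi fun i =>
            Set.Ico (((r i : ℕ):ℝ)/n) ((((r i : ℕ):ℝ)+1)/n))
          (fun _ => ψ (fun i => Real.toNNReal (((r i : ℕ):ℝ) / n))) s) = F n s := by
    intro n hn s
    have hn' : 0 < n := hn
    by_cases h1 : ∀ i, 0 ≤ s i
    · by_cases h2 : (∀ i, ⌊(n:ℝ) * s i⌋₊ < ⌊(n:ℝ) * t⌋₊) ∧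
          (∀ i j : Fin k, i < j → ⌊(n:ℝ) * s i⌋₊ < ⌊(n:ℝ) * s j⌋₊)
      · set r₀ : Fin k → Fin (⌊(n : ℝ) * t⌋₊) := fun i => ⟨⌊(n:ℝ) * s i⌋₊, h2.1 i⟩ with hr₀
        have hmem : r₀ ∈ Finset.univ.filter
            (fun r : Fin k → Fin (⌊(n : ℝ) * t⌋₊) => ∀ i j : Fin k, i < j → r i < r j) := by
          simp only [Finset.mem_filter, Finset.mem_univ, true_and]
          intro i j hij
          exact h2.2 i j hij
        rw [Finset.sum_eq_single_of_mem r₀ hmem ?_]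
        · have hin : s ∈ Set.univ.pi fun i =>
              Set.Ico (((r₀ i : ℕ):ℝ)/n) ((((r₀ i : ℕ):ℝ)+1)/n) := by
            intro i _
            exact (mem_cell_iff hn' (s i)).mpr ⟨h1 i, rfl⟩
          rw [Set.indicator_of_mem hin]
          simp only [hF]
          rw [if_pos ⟨h1, h2⟩]
        · intro r hr hne
          apply Set.indicator_of_notMem
          intro hmem'
          apply hne
          funext i
          apply Fin.ext
          exact (((mem_cell_iff hn' (s i)).mp (hmem' i (Set.mem_univ i))).2).symm
      · simp only [hF]
        rw [if_neg (by tauto)]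
        apply Finset.sum_eq_zero
        intro r hr
        apply Set.indicator_of_notMem
        intro hmem'
        apply h2
        have key : ∀ i, ⌊(n:ℝ)*s i⌋₊ = (r i : ℕ) := fun i =>
          ((mem_cell_iff hn' (s i)).mp (hmem' i (Set.mem_univ i))).2
        constructor
        · intro i; rw [key i]; exact (r i).isLt
        · intro i j hij; rw [key i, key j]
          exact (Finset.mem_filter.mp hr).2 i j hij
    · simp only [hF]
      rw [if_neg (by tauto)]
      push_neg at h1
      obtain ⟨i0, hi0⟩ := h1
      apply Finset.sum_eq_zero
      intro r hr
      apply Set.indicator_of_notMem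
      intro hmem'
      have := ((mem_cell_iff hn' (s i0)).mp (hmem' i0 (Set.mem_univ i0))).1
      linarith
  -- cells are measurable, with known volume
  have hcellmeas : ∀ (n:ℕ) (r : Fin k → ℕ),
      MeasurableSet (Set.univ.pi fun i => Set.Ico ((r i:ℝ)/n) (((r i:ℝ)+1)/n)) :=
    fun n r => MeasurableSet.univ_pi fun i => measurableSet_Ico
  have hcellvol : ∀ (n:ℕ), 1 ≤ n → ∀ (r : Fin k → ℕ),
      volume (Set.univ.pi fun i => Set.Ico ((r i:ℝ)/n) (((r i:ℝ)+1)/n))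
        = ENNReal.ofReal ((1:ℝ)/n) ^ k := by
    intro n hn r
    rw [volume_pi_pi]
    have hv : ∀ i : Fin k, volume (Set.Ico ((r i:ℝ)/n) (((r i:ℝ)+1)/n))
        = ENNReal.ofReal (1/n) := by
      intro i
      rw [Real.volume_Ico]
      congr 1
      have hn' : (0:ℝ) < n := by exact_mod_cast hn
      field_simp
      ring
    simp [hv, Finset.prod_const]
  have hcellint : ∀ (n:ℕ), 1 ≤ n → ∀ (r : Fin k → ℕ) (c : ℝ),
      Integrable ((Set.univ.pi fun i =>
        Set.Ico ((r i:ℝ)/n) (((r i:ℝ)+1)/n)).indicator (fun _ => c)) := by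
    intro n hn r c
    refine (integrable_indicator_iff (hcellmeas n r)).mpr ?_
    refine (integrableOn_const_iff).mpr (Or.inr ?_)
    rw [hcellvol n hn r]
    exact ENNReal.pow_lt_top ENNReal.ofReal_lt_top
  have hFint : ∀ n, 1 ≤ n → Integrable (F n) := by
    intro n hn
    rw [show F n = fun s => (∑ r ∈ Finset.univ.filter
        (fun r : Fin k → Fin (⌊(n : ℝ) * t⌋₊) => ∀ i j : Fin k, i < j → r i < r j),
        Set.indicator (Set.univ.pi fun i =>
            Set.Ico (((r i : ℕ):ℝ)/n) ((((r i : ℕ):ℝ)+1)/n))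
          (fun _ => ψ (fun i => Real.toNNReal (((r i : ℕ):ℝ) / n))) s)
      from funext fun s => (hrep n hn s).symm]
    exact integrable_finset_sum _ (fun r hr => hcellint n hn _ _)
  have hFval : ∀ n, 1 ≤ n → ∫ s, F n s =
      (1 / (n : ℝ) ^ k) *
          ∑ r ∈ Finset.univ.filter
              (fun r : Fin k → Fin (⌊(n : ℝ) * t⌋₊) => ∀ i j : Fin k, i < j → r i < r j),
            ψ (fun i => Real.toNNReal (((r i : ℕ) : ℝ) / n)) := by
    intro n hn
    have hn' : (0:ℝ) < n := by exact_mod_cast hn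
    rw [show F n = fun s => (∑ r ∈ Finset.univ.filter
        (fun r : Fin k → Fin (⌊(n : ℝ) * t⌋₊) => ∀ i j : Fin k, i < j → r i < r j),
        Set.indicator (Set.univ.pi fun i =>
            Set.Ico (((r i : ℕ):ℝ)/n) ((((r i : ℕ):ℝ)+1)/n))
          (fun _ => ψ (fun i => Real.toNNReal (((r i : ℕ):ℝ) / n))) s)
      from funext fun s => (hrep n hn s).symm]
    rw [integral_finset_sum _ (fun r hr => hcellint n hn _ _)]
    have hterm : ∀ r : Fin k → Fin (⌊(n : ℝ) * t⌋₊),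
        (∫ s, Set.indicator (Set.univ.pi fun i =>
            Set.Ico (((r i : ℕ):ℝ)/n) ((((r i : ℕ):ℝ)+1)/n))
          (fun _ => ψ (fun i => Real.toNNReal (((r i : ℕ):ℝ) / n))) s)
        = (1/(n:ℝ))^k * ψ (fun i => Real.toNNReal (((r i : ℕ):ℝ) / n)) := by
      intro r
      rw [integral_indicator_const _ (hcellmeas n _), measureReal_def, hcellvol n hn]
      rw [ENNReal.toReal_pow, ENNReal.toReal_ofReal (by positivity), smul_eq_mul]
    simp_rw [hterm]
    rw [← Finset.mul_sum, one_div_pow]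
  -- the dominating function
  set B : (Fin k → ℝ) → ℝ :=
    (Set.univ.pi fun _ : Fin k => Set.Icc (0:ℝ) t).indicator (fun _ => C) with hB
  have hC0 : 0 ≤ C := le_trans (abs_nonneg _) (hbdd (fun _ => 0))
  have hBint : Integrable B := by
    rw [hB]
    refine (integrable_indicator_iff (MeasurableSet.univ_pi fun _ => measurableSet_Icc)).mpr ?_
    refine (integrableOn_const_iff).mpr (Or.inr ?_)
    rw [volume_pi_pi]
    simp only [Real.volume_Icc, sub_zero, Finset.prod_const]
    exact ENNReal.pow_lt_top ENNReal.ofReal_lt_top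
  have hbound : ∀ n, 1 ≤ n → ∀ s, ‖F n s‖ ≤ B s := by
    intro n hn s
    have hn' : (0:ℝ) < n := by exact_mod_cast hn
    simp only [hF]
    split_ifs with h
    · have hsmem : s ∈ Set.univ.pi fun _ : Fin k => Set.Icc (0:ℝ) t := by
        intro i _
        refine ⟨h.1 i, ?_⟩
        have h2 := h.2.1 i
        have a1 : (n:ℝ) * s i < (⌊(n:ℝ)*s i⌋₊ : ℝ) + 1 := Nat.lt_floor_add_one _
        have a2 : ((⌊(n:ℝ)*s i⌋₊ : ℝ) + 1) ≤ (⌊(n:ℝ)*t⌋₊ : ℝ) := by exact_mod_cast h2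
        have a3 : ((⌊(n:ℝ)*t⌋₊ : ℝ)) ≤ (n:ℝ)*t := Nat.floor_le (by positivity)
        nlinarith
      rw [hB, Set.indicator_of_mem hsmem, Real.norm_eq_abs]
      exact hbdd _
    · rw [norm_zero, hB]
      exact Set.indicator_nonneg (fun _ _ => hC0) s
  -- a.e. pointwise convergence
  have hzero : volume {s : Fin k → ℝ | ∃ i, s i = 0} = 0 := by
    have heq : {s : Fin k → ℝ | ∃ i, s i = 0} = ⋃ i, {s : Fin k → ℝ | s i = 0} := by
      ext s; simp
    rw [heq]
    refine measure_iUnion_null fun i => ?_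
    simpa [MeasureTheory.volume_pi] using
      MeasureTheory.Measure.pi_hyperplane (fun _ : Fin k => (volume : Measure ℝ)) i (0:ℝ)
  have hae : ∀ᵐ s : Fin k → ℝ, ∀ i, s i ≠ 0 := by
    rw [ae_iff]
    convert hzero using 2
    ext s
    simp
  have hlim : ∀ᵐ s : Fin k → ℝ, Tendsto (fun n => F n s) atTop
      (𝓝 (Set.indicator A (fun s => ψ (fun i => Real.toNNReal (s i))) s)) := by
    filter_upwards [hae] with s hs
    by_cases hsA : s ∈ A
    · rw [Set.indicator_of_mem hsA]
      obtain ⟨hord, hio⟩ := hsA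
      have h1 : ∀ i : Fin k, ∀ᶠ n : ℕ in atTop, ⌊(n:ℝ)*s i⌋₊ < ⌊(n:ℝ)*t⌋₊ := by
        intro i
        have hst : s i < t := (hio i).2
        have hev1 : ∀ᶠ n : ℕ in atTop, (1:ℝ) ≤ (n:ℝ) * (t - s i) :=
          (tendsto_natCast_atTop_atTop.atTop_mul_const
            (by linarith : (0:ℝ) < t - s i)).eventually_ge_atTop 1
        filter_upwards [hev1] with n hn1
        have b1 : (⌊(n:ℝ)*s i⌋₊:ℝ) ≤ (n:ℝ)*s i :=
          Nat.floor_le (mul_nonneg (Nat.cast_nonneg n) (hio i).1.le)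
        have b2 : (n:ℝ)*t < (⌊(n:ℝ)*t⌋₊:ℝ) + 1 := Nat.lt_floor_add_one _
        have : (⌊(n:ℝ)*s i⌋₊:ℝ) < (⌊(n:ℝ)*t⌋₊:ℝ) := by nlinarith
        exact_mod_cast this
      have h2 : ∀ i j : Fin k, i < j →
          ∀ᶠ n : ℕ in atTop, ⌊(n:ℝ)*s i⌋₊ < ⌊(n:ℝ)*s j⌋₊ := by
        intro i j hij
        have hst : s i < s j := hord i j hij
        have hev1 : ∀ᶠ n : ℕ in atTop, (1:ℝ) ≤ (n:ℝ) * (s j - s i) :=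
          (tendsto_natCast_atTop_atTop.atTop_mul_const
            (by linarith : (0:ℝ) < s j - s i)).eventually_ge_atTop 1
        filter_upwards [hev1] with n hn1
        have b1 : (⌊(n:ℝ)*s i⌋₊:ℝ) ≤ (n:ℝ)*s i :=
          Nat.floor_le (mul_nonneg (Nat.cast_nonneg n) (hio i).1.le)
        have b2 : (n:ℝ)*(s j) < (⌊(n:ℝ)*(s j)⌋₊:ℝ) + 1 := Nat.lt_floor_add_one _
        have : (⌊(n:ℝ)*s i⌋₊:ℝ) < (⌊(n:ℝ)*s j⌋₊:ℝ) := by nlinarith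
        exact_mod_cast this
      have hall1 : ∀ᶠ n : ℕ in atTop, ∀ i : Fin k, ⌊(n:ℝ)*s i⌋₊ < ⌊(n:ℝ)*t⌋₊ :=
        eventually_all.mpr h1
      have hall2 : ∀ᶠ n : ℕ in atTop, ∀ i j : Fin k, i < j →
          ⌊(n:ℝ)*s i⌋₊ < ⌊(n:ℝ)*s j⌋₊ := by
        refine eventually_all.mpr fun i => eventually_all.mpr fun j => ?_
        by_cases hij : i < j
        · filter_upwards [h2 i j hij] with n hn _; exact hn
        · exact Eventually.of_forall fun n h => absurd h hij
      have hev : ∀ᶠ n : ℕ in atTop,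
          F n s = ψ (fun i => Real.toNNReal ((⌊(n:ℝ)*s i⌋₊ : ℝ)/n)) := by
        filter_upwards [hall1, hall2] with n ha hb
        simp only [hF]
        rw [if_pos ⟨fun i => (hio i).1.le, ha, hb⟩]
      have htd : Tendsto (fun n : ℕ => (fun i => Real.toNNReal ((⌊(n:ℝ)*s i⌋₊ : ℝ)/n)))
          atTop (𝓝 (fun i => Real.toNNReal (s i))) := by
        rw [tendsto_pi_nhds]
        intro i
        have hfl : Tendsto (fun n : ℕ => (⌊(n:ℝ)*s i⌋₊:ℝ)/n) atTop (𝓝 (s i)) := by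
          have := (tendsto_nat_floor_mul_div_atTop (hio i).1.le).comp
            (tendsto_natCast_atTop_atTop (R := ℝ))
          simpa [Function.comp_def, mul_comm] using this
        exact (continuous_real_toNNReal.tendsto _).comp hfl
      exact Filter.Tendsto.congr' (hev.mono fun n h => h.symm) ((hcont.tendsto _).comp htd)
    · rw [Set.indicator_of_notMem hsA]
      have hzero' : ∀ᶠ n : ℕ in atTop, F n s = 0 := by
        simp only [hA, Set.mem_setOf_eq, not_and_or, not_forall] at hsA
        rcases hsA with ⟨i, j, hij, hge⟩ | ⟨i, hnot⟩
        · have hge' : s j ≤ s i := not_lt.mp (by tauto)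
          refine Eventually.of_forall fun n => ?_
          simp only [hF]
          rw [if_neg]
          rintro ⟨-, -, hc⟩
          have hmono : ⌊(n:ℝ)*s j⌋₊ ≤ ⌊(n:ℝ)*s i⌋₊ :=
            Nat.floor_mono (mul_le_mul_of_nonneg_left hge' (Nat.cast_nonneg n))
          exact absurd (hc i j hij) (not_lt.mpr hmono)
        · rw [Set.mem_Ioo, not_and_or] at hnot
          rcases hnot with h0 | hgt
          · have : s i < 0 := lt_of_le_of_ne (not_lt.mp h0) (hs i)
            refine Eventually.of_forall fun n => ?_
            simp only [hF]
            rw [if_neg]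
            rintro ⟨ha, -, -⟩
            exact absurd (ha i) (not_le.mpr this)
          · have hti : t ≤ s i := not_lt.mp hgt
            refine Eventually.of_forall fun n => ?_
            simp only [hF]
            rw [if_neg]
            rintro ⟨-, hb, -⟩
            have hmono : ⌊(n:ℝ)*t⌋₊ ≤ ⌊(n:ℝ)*s i⌋₊ :=
              Nat.floor_mono (mul_le_mul_of_nonneg_left hti (Nat.cast_nonneg n))
            exact absurd (hb i) (not_lt.mpr hmono)
      exact Filter.Tendsto.congr' (hzero'.mono fun n h => h.symm) tendsto_const_nhds
  have hdct : Tendsto (fun n => ∫ s, F n s) atTop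
      (𝓝 (∫ s, Set.indicator A (fun s => ψ (fun i => Real.toNNReal (s i))) s)) := by
    refine tendsto_integral_filter_of_dominated_convergence B ?_ ?_ hBint hlim
    · filter_upwards [eventually_ge_atTop 1] with n hn
      exact (hFint n hn).1
    · filter_upwards [eventually_ge_atTop 1] with n hn
      exact Eventually.of_forall (hbound n hn)
  rw [← integral_indicator hAmeas]
  refine Filter.Tendsto.congr' ?_ hdct
  filter_upwards [eventually_ge_atTop 1] with n hn
  exact hFval n hn
end

section
/- Let d ∈ {1,2,3} and T > 0. Then the iterated integral ∫₀^T dt₃ ∫₀^{t₃} dt₂ ∫₀^{t₂} dt₁ ∫_{t₂}^{t₃} ds₃ ∫_{t₁}^{t₂} ds₂ ∫₀^{t₁} ds₁ (t₂ − s₁)^{−d/2} (s₃ − s₂)^{−d/2} is finite. -/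
open MeasureTheory Set ENNReal

lemma cmp_rpow (d : ℕ) (hd3 : d ≤ 3) {x : ℝ} (hx : 0 < x) :
    x ^ (-(d : ℝ) / 2) ≤ x ^ (-(3 : ℝ) / 2) + 1 := by
  rcases le_or_gt x 1 with h1 | h1
  · have h : x ^ (-(d : ℝ) / 2) ≤ x ^ (-(3 : ℝ) / 2) := by
      apply Real.rpow_le_rpow_of_exponent_ge hx h1
      have : (d : ℝ) ≤ 3 := by exact_mod_cast hd3
      linarith
    linarith
  · have h2 : x ^ (-(d : ℝ) / 2) ≤ 1 := by
      apply Real.rpow_le_one_of_one_le_of_nonpos h1.le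
      have : (0 : ℝ) ≤ d := Nat.cast_nonneg d
      linarith
    have h3 : 0 ≤ x ^ (-(3 : ℝ) / 2) := Real.rpow_nonneg (by linarith) _
    linarith

/-- integral of `(c-x)^{-3/2}` over `Ioc a b` with `b < c`. -/
lemma lint_upper (a b c : ℝ) (hab : a ≤ b) (hbc : b < c) :
    ∫⁻ x in Ioc a b, ENNReal.ofReal ((c - x) ^ (-(3 : ℝ) / 2)) ≤
      ENNReal.ofReal (2 * (c - b) ^ (-(1 : ℝ) / 2)) := by
  have hcont : ContinuousOn (fun x : ℝ => (c - x) ^ (-(3 : ℝ) / 2)) (Icc a b) := by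
    apply ContinuousOn.rpow_const
    · exact (continuous_const.sub continuous_id).continuousOn
    · intro x hx
      left
      have := hx.2
      intro h
      nlinarith [hx.2]
  have hint : IntegrableOn (fun x : ℝ => (c - x) ^ (-(3 : ℝ) / 2)) (Ioc a b) :=
    (hcont.integrableOn_Icc).mono_set Ioc_subset_Icc_self
  have hnn : 0 ≤ᵐ[volume.restrict (Ioc a b)]
      fun x : ℝ => (c - x) ^ (-(3 : ℝ) / 2) := by
    filter_upwards [ae_restrict_mem measurableSet_Ioc] with x hx
    exact Real.rpow_nonneg (by linarith [hx.2]) _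
  rw [← ofReal_integral_eq_lintegral_ofReal hint hnn]
  apply ENNReal.ofReal_le_ofReal
  rw [← intervalIntegral.integral_of_le hab]
  rw [intervalIntegral.integral_comp_sub_left (fun x : ℝ => x ^ (-(3 : ℝ) / 2)) c]
  rw [integral_rpow]
  · have h1 : (0:ℝ) < c - b := by linarith
    have h2 : (0:ℝ) < c - a := by linarith
    have : (-(3:ℝ)/2 + 1) = -(1:ℝ)/2 := by norm_num
    rw [this]
    have hnn2 : 0 ≤ (c - a) ^ (-(1:ℝ)/2) := Real.rpow_nonneg h2.le _
    have : ((c-a) ^ (-(1:ℝ)/2) - (c-b) ^ (-(1:ℝ)/2)) / (-(1:ℝ)/2)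
        = 2 * (c - b) ^ (-(1:ℝ)/2) - 2 * (c - a) ^ (-(1:ℝ)/2) := by ring
    rw [this]
    linarith
  · right
    constructor
    · norm_num
    · rw [Set.mem_uIcc]
      push_neg
      constructor <;> intro h <;> nlinarith

/-- integral of `(b-x)^{-1/2}` over `Ioc a b`. -/
lemma lint_half_upper (a b : ℝ) (hab : a ≤ b) :
    ∫⁻ x in Ioc a b, ENNReal.ofReal ((b - x) ^ (-(1 : ℝ) / 2)) ≤
      ENNReal.ofReal (2 * (b - a) ^ ((1 : ℝ) / 2)) := by
  have hII : IntervalIntegrable (fun x : ℝ => (b - x) ^ (-(1 : ℝ) / 2)) volume a b := by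
    have h := (intervalIntegral.intervalIntegrable_rpow' (a := b - a) (b := b - b)
      (r := -(1:ℝ)/2) (by norm_num)).comp_sub_left b
    simpa using h
  have hint : IntegrableOn (fun x : ℝ => (b - x) ^ (-(1 : ℝ) / 2)) (Ioc a b) :=
    (intervalIntegrable_iff_integrableOn_Ioc_of_le hab).mp hII
  have hnn : 0 ≤ᵐ[volume.restrict (Ioc a b)]
      fun x : ℝ => (b - x) ^ (-(1 : ℝ) / 2) := by
    filter_upwards [ae_restrict_mem measurableSet_Ioc] with x hx
    exact Real.rpow_nonneg (by linarith [hx.2]) _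
  rw [← ofReal_integral_eq_lintegral_ofReal hint hnn]
  apply ENNReal.ofReal_le_ofReal
  rw [← intervalIntegral.integral_of_le hab]
  rw [intervalIntegral.integral_comp_sub_left (fun x : ℝ => x ^ (-(1 : ℝ) / 2)) b]
  rw [sub_self, integral_rpow (Or.inl (by norm_num))]
  have h1 : (-(1:ℝ)/2 + 1) = (1:ℝ)/2 := by norm_num
  rw [h1, Real.zero_rpow (by norm_num)]
  have : ((b - a) ^ ((1:ℝ)/2) - 0) / ((1:ℝ)/2) = 2 * (b - a) ^ ((1:ℝ)/2) := by ring
  rw [this]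

/-- integral of `(x-a)^{-1/2}` over `Ioc a b`. -/
lemma lint_half_lower (a b : ℝ) (hab : a ≤ b) :
    ∫⁻ x in Ioc a b, ENNReal.ofReal ((x - a) ^ (-(1 : ℝ) / 2)) ≤
      ENNReal.ofReal (2 * (b - a) ^ ((1 : ℝ) / 2)) := by
  have hII : IntervalIntegrable (fun x : ℝ => (x - a) ^ (-(1 : ℝ) / 2)) volume a b := by
    have h := (intervalIntegral.intervalIntegrable_rpow' (a := a - a) (b := b - a)
      (r := -(1:ℝ)/2) (by norm_num)).comp_sub_right a
    simpa using h
  have hint : IntegrableOn (fun x : ℝ => (x - a) ^ (-(1 : ℝ) / 2)) (Ioc a b) :=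
    (intervalIntegrable_iff_integrableOn_Ioc_of_le hab).mp hII
  have hnn : 0 ≤ᵐ[volume.restrict (Ioc a b)]
      fun x : ℝ => (x - a) ^ (-(1 : ℝ) / 2) := by
    filter_upwards [ae_restrict_mem measurableSet_Ioc] with x hx
    exact Real.rpow_nonneg (by linarith [hx.1]) _
  rw [← ofReal_integral_eq_lintegral_ofReal hint hnn]
  apply ENNReal.ofReal_le_ofReal
  rw [← intervalIntegral.integral_of_le hab]
  rw [intervalIntegral.integral_comp_sub_right (fun x : ℝ => x ^ (-(1 : ℝ) / 2)) a]
  rw [sub_self, integral_rpow (Or.inl (by norm_num))]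
  have h1 : (-(1:ℝ)/2 + 1) = (1:ℝ)/2 := by norm_num
  rw [h1, Real.zero_rpow (by norm_num)]
  have : ((b - a) ^ ((1:ℝ)/2) - 0) / ((1:ℝ)/2) = 2 * (b - a) ^ ((1:ℝ)/2) := by ring
  rw [this]

/-- bound for the singular factor integral: `b < c`. -/
lemma bound1 (d : ℕ) (hd3 : d ≤ 3) (a b c T' : ℝ) (hab : a ≤ b) (hbc : b < c)
    (hba : b - a ≤ T') :
    ∫⁻ x in Ioc a b, ENNReal.ofReal ((c - x) ^ (-(d : ℝ) / 2)) ≤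
      ENNReal.ofReal (2 * (c - b) ^ (-(1 : ℝ) / 2) + T') := by
  have h1 : (∫⁻ x in Ioc a b, ENNReal.ofReal ((c - x) ^ (-(d : ℝ) / 2))) ≤
      ∫⁻ x in Ioc a b, (ENNReal.ofReal ((c - x) ^ (-(3 : ℝ) / 2)) + 1) := by
    apply setLIntegral_mono' measurableSet_Ioc
    intro x hx
    have hx2 : 0 < c - x := by linarith [hx.2]
    calc ENNReal.ofReal ((c - x) ^ (-(d : ℝ) / 2))
        ≤ ENNReal.ofReal ((c - x) ^ (-(3 : ℝ) / 2) + 1) :=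
          ENNReal.ofReal_le_ofReal (cmp_rpow d hd3 hx2)
      _ = ENNReal.ofReal ((c - x) ^ (-(3 : ℝ) / 2)) + ENNReal.ofReal 1 :=
          ENNReal.ofReal_add (Real.rpow_nonneg hx2.le _) zero_le_one
      _ = _ := by rw [ENNReal.ofReal_one]
  refine h1.trans ?_
  rw [lintegral_add_right _ measurable_const, setLIntegral_one, Real.volume_Ioc]
  have h2 := lint_upper a b c hab hbc
  have h3 : ENNReal.ofReal (b - a) ≤ ENNReal.ofReal T' := ENNReal.ofReal_le_ofReal hba
  calc _ ≤ ENNReal.ofReal (2 * (c - b) ^ (-(1:ℝ)/2)) + ENNReal.ofReal T' := add_le_add h2 h3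
    _ = ENNReal.ofReal (2 * (c - b) ^ (-(1:ℝ)/2) + T') := by
        have hcb : (0:ℝ) ≤ c - b := by linarith
        rw [← ENNReal.ofReal_add (mul_nonneg (by norm_num) (Real.rpow_nonneg hcb _))
          (by linarith)]

/-- bound for `∫ (2(x-a)^{-1/2} + T')`. -/
lemma bound2 (a b T' : ℝ) (hab : a ≤ b) (hba : b - a ≤ T') :
    ∫⁻ x in Ioc a b, ENNReal.ofReal (2 * (x - a) ^ (-(1 : ℝ) / 2) + T') ≤
      ENNReal.ofReal (4 * T' ^ ((1 : ℝ) / 2) + T' * T') := by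
  have hT' : 0 ≤ T' := le_trans (by linarith) hba
  have h1 : (∫⁻ x in Ioc a b, ENNReal.ofReal (2 * (x - a) ^ (-(1 : ℝ) / 2) + T')) ≤
      ∫⁻ x in Ioc a b,
        (ENNReal.ofReal 2 * ENNReal.ofReal ((x - a) ^ (-(1 : ℝ) / 2)) + ENNReal.ofReal T') := by
    apply setLIntegral_mono' measurableSet_Ioc
    intro x hx
    have hx1 : 0 ≤ x - a := by linarith [hx.1]
    rw [ENNReal.ofReal_add (mul_nonneg (by norm_num) (Real.rpow_nonneg hx1 _)) hT',
      ENNReal.ofReal_mul (by norm_num)]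
  refine h1.trans ?_
  rw [lintegral_add_right _ measurable_const,
    lintegral_const_mul' _ _ ENNReal.ofReal_ne_top, setLIntegral_const, Real.volume_Ioc]
  have h2 := lint_half_lower a b hab
  have hba' : (b - a) ^ ((1:ℝ)/2) ≤ T' ^ ((1:ℝ)/2) :=
    Real.rpow_le_rpow (by linarith) (by linarith) (by norm_num)
  calc _ ≤ ENNReal.ofReal 2 * ENNReal.ofReal (2 * (b - a) ^ ((1:ℝ)/2)) +
          ENNReal.ofReal T' * ENNReal.ofReal (b - a) :=
        add_le_add (mul_le_mul_right h2 _) le_rfl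
    _ = ENNReal.ofReal (2 * (2 * (b - a) ^ ((1:ℝ)/2))) + ENNReal.ofReal (T' * (b - a)) := by
        rw [← ENNReal.ofReal_mul (by norm_num), ← ENNReal.ofReal_mul hT']
    _ = ENNReal.ofReal (2 * (2 * (b - a) ^ ((1:ℝ)/2)) + T' * (b - a)) := by
        have hba0 : (0:ℝ) ≤ b - a := by linarith
        rw [← ENNReal.ofReal_add
          (by nlinarith [Real.rpow_nonneg hba0 ((1:ℝ)/2)]) (by nlinarith)]
    _ ≤ _ := by
        apply ENNReal.ofReal_le_ofReal
        nlinarith [Real.rpow_nonneg (sub_nonneg.2 hab) ((1:ℝ)/2)]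

/-- bound for `∫ (2(b-x)^{-1/2} + T')`. -/
lemma bound2' (a b T' : ℝ) (hab : a ≤ b) (hba : b - a ≤ T') :
    ∫⁻ x in Ioc a b, ENNReal.ofReal (2 * (b - x) ^ (-(1 : ℝ) / 2) + T') ≤
      ENNReal.ofReal (4 * T' ^ ((1 : ℝ) / 2) + T' * T') := by
  have hT' : 0 ≤ T' := le_trans (by linarith) hba
  have h1 : (∫⁻ x in Ioc a b, ENNReal.ofReal (2 * (b - x) ^ (-(1 : ℝ) / 2) + T')) ≤
      ∫⁻ x in Ioc a b,
        (ENNReal.ofReal 2 * ENNReal.ofReal ((b - x) ^ (-(1 : ℝ) / 2)) + ENNReal.ofReal T') := by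
    apply setLIntegral_mono' measurableSet_Ioc
    intro x hx
    have hx1 : 0 ≤ b - x := by linarith [hx.2]
    rw [ENNReal.ofReal_add (mul_nonneg (by norm_num) (Real.rpow_nonneg hx1 _)) hT',
      ENNReal.ofReal_mul (by norm_num)]
  refine h1.trans ?_
  rw [lintegral_add_right _ measurable_const,
    lintegral_const_mul' _ _ ENNReal.ofReal_ne_top, setLIntegral_const, Real.volume_Ioc]
  have h2 := lint_half_upper a b hab
  have hba' : (b - a) ^ ((1:ℝ)/2) ≤ T' ^ ((1:ℝ)/2) :=
    Real.rpow_le_rpow (by linarith) (by linarith) (by norm_num)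
  calc _ ≤ ENNReal.ofReal 2 * ENNReal.ofReal (2 * (b - a) ^ ((1:ℝ)/2)) +
          ENNReal.ofReal T' * ENNReal.ofReal (b - a) :=
        add_le_add (mul_le_mul_right h2 _) le_rfl
    _ = ENNReal.ofReal (2 * (2 * (b - a) ^ ((1:ℝ)/2))) + ENNReal.ofReal (T' * (b - a)) := by
        rw [← ENNReal.ofReal_mul (by norm_num), ← ENNReal.ofReal_mul hT']
    _ = ENNReal.ofReal (2 * (2 * (b - a) ^ ((1:ℝ)/2)) + T' * (b - a)) := by
        have hba0 : (0:ℝ) ≤ b - a := by linarith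
        rw [← ENNReal.ofReal_add
          (by nlinarith [Real.rpow_nonneg hba0 ((1:ℝ)/2)]) (by nlinarith)]
    _ ≤ _ := by
        apply ENNReal.ofReal_le_ofReal
        nlinarith [Real.rpow_nonneg (sub_nonneg.2 hab) ((1:ℝ)/2)]

/-- For `d ∈ {1,2,3}` and `T > 0`, the iterated Lebesgue integral
`∫₀^T dt₃ ∫₀^{t₃} dt₂ ∫₀^{t₂} dt₁ ∫_{t₂}^{t₃} ds₃ ∫_{t₁}^{t₂} ds₂ ∫₀^{t₁} ds₁
  (t₂-s₁)^{-d/2} (s₃-s₂)^{-d/2}` is finite. -/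
theorem iterated_singular_integral_finite_III (d : ℕ) (hd1 : 1 ≤ d) (hd3 : d ≤ 3)
    (T : ℝ) (hT : 0 < T) :
    (∫⁻ t₃ in Set.Ioc (0 : ℝ) T, ∫⁻ t₂ in Set.Ioc (0 : ℝ) t₃, ∫⁻ t₁ in Set.Ioc (0 : ℝ) t₂,
      ∫⁻ s₃ in Set.Ioc t₂ t₃, ∫⁻ s₂ in Set.Ioc t₁ t₂, ∫⁻ s₁ in Set.Ioc (0 : ℝ) t₁,
        ENNReal.ofReal ((t₂ - s₁) ^ (-(d : ℝ) / 2) * (s₃ - s₂) ^ (-(d : ℝ) / 2))) < ⊤ := by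
  set K : ℝ := 4 * T ^ ((1 : ℝ) / 2) + T * T with hKdef
  set C : ℝ≥0∞ := ENNReal.ofReal K * ENNReal.ofReal K with hCdef
  have main : ∀ t₃ ∈ Ioc (0 : ℝ) T, ∀ t₂ ∈ Ioc (0 : ℝ) t₃,
      (∫⁻ t₁ in Ioc (0 : ℝ) t₂, ∫⁻ s₃ in Ioc t₂ t₃, ∫⁻ s₂ in Ioc t₁ t₂,
        ∫⁻ s₁ in Ioc (0 : ℝ) t₁,
          ENNReal.ofReal ((t₂ - s₁) ^ (-(d : ℝ) / 2) * (s₃ - s₂) ^ (-(d : ℝ) / 2))) ≤ C := by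
    intro t₃ ht₃ t₂ ht₂
    rw [← Measure.restrict_congr_set Ioo_ae_eq_Ioc]
    have step_t₁ : ∀ t₁ ∈ Ioo (0 : ℝ) t₂,
        (∫⁻ s₃ in Ioc t₂ t₃, ∫⁻ s₂ in Ioc t₁ t₂, ∫⁻ s₁ in Ioc (0 : ℝ) t₁,
            ENNReal.ofReal ((t₂ - s₁) ^ (-(d : ℝ) / 2) * (s₃ - s₂) ^ (-(d : ℝ) / 2)))
          ≤ ENNReal.ofReal (2 * (t₂ - t₁) ^ (-(1 : ℝ) / 2) + T) * ENNReal.ofReal K := by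
      intro t₁ ht₁
      set β : ℝ≥0∞ := ENNReal.ofReal (2 * (t₂ - t₁) ^ (-(1 : ℝ) / 2) + T) with hβdef
      have step_s₃ : ∀ s₃ ∈ Ioc t₂ t₃,
          (∫⁻ s₂ in Ioc t₁ t₂, ∫⁻ s₁ in Ioc (0 : ℝ) t₁,
              ENNReal.ofReal ((t₂ - s₁) ^ (-(d : ℝ) / 2) * (s₃ - s₂) ^ (-(d : ℝ) / 2)))
            ≤ β * ENNReal.ofReal (2 * (s₃ - t₂) ^ (-(1 : ℝ) / 2) + T) := by
        intro s₃ hs₃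
        have step_s₂ : ∀ s₂ ∈ Ioc t₁ t₂,
            (∫⁻ s₁ in Ioc (0 : ℝ) t₁,
                ENNReal.ofReal ((t₂ - s₁) ^ (-(d : ℝ) / 2) * (s₃ - s₂) ^ (-(d : ℝ) / 2)))
              ≤ β * ENNReal.ofReal ((s₃ - s₂) ^ (-(d : ℝ) / 2)) := by
          intro s₂ hs₂
          calc (∫⁻ s₁ in Ioc (0 : ℝ) t₁,
                ENNReal.ofReal ((t₂ - s₁) ^ (-(d : ℝ) / 2) * (s₃ - s₂) ^ (-(d : ℝ) / 2)))
              ≤ ∫⁻ s₁ in Ioc (0 : ℝ) t₁,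
                  ENNReal.ofReal ((s₃ - s₂) ^ (-(d : ℝ) / 2)) *
                    ENNReal.ofReal ((t₂ - s₁) ^ (-(d : ℝ) / 2)) := by
                apply setLIntegral_mono' measurableSet_Ioc
                intro s₁ hs₁
                have h1 : (0 : ℝ) ≤ t₂ - s₁ := by
                  have := hs₁.2; have := ht₁.2; linarith
                rw [ENNReal.ofReal_mul (Real.rpow_nonneg h1 _), mul_comm]
            _ = ENNReal.ofReal ((s₃ - s₂) ^ (-(d : ℝ) / 2)) *
                  ∫⁻ s₁ in Ioc (0 : ℝ) t₁, ENNReal.ofReal ((t₂ - s₁) ^ (-(d : ℝ) / 2)) :=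
                lintegral_const_mul' _ _ ENNReal.ofReal_ne_top
            _ ≤ ENNReal.ofReal ((s₃ - s₂) ^ (-(d : ℝ) / 2)) * β := by
                apply mul_le_mul_right
                exact bound1 d hd3 0 t₁ t₂ T ht₁.1.le ht₁.2
                  (by have := ht₂.2; have := ht₃.2; have := ht₁.2; linarith)
            _ = β * ENNReal.ofReal ((s₃ - s₂) ^ (-(d : ℝ) / 2)) := mul_comm _ _
        calc (∫⁻ s₂ in Ioc t₁ t₂, ∫⁻ s₁ in Ioc (0 : ℝ) t₁,
              ENNReal.ofReal ((t₂ - s₁) ^ (-(d : ℝ) / 2) * (s₃ - s₂) ^ (-(d : ℝ) / 2)))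
            ≤ ∫⁻ s₂ in Ioc t₁ t₂, β * ENNReal.ofReal ((s₃ - s₂) ^ (-(d : ℝ) / 2)) :=
              setLIntegral_mono' measurableSet_Ioc step_s₂
          _ = β * ∫⁻ s₂ in Ioc t₁ t₂, ENNReal.ofReal ((s₃ - s₂) ^ (-(d : ℝ) / 2)) :=
              lintegral_const_mul' _ _ ENNReal.ofReal_ne_top
          _ ≤ β * ENNReal.ofReal (2 * (s₃ - t₂) ^ (-(1 : ℝ) / 2) + T) := by
              apply mul_le_mul_right
              exact bound1 d hd3 t₁ t₂ s₃ T ht₁.2.le hs₃.1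
                (by have := ht₁.1; have := ht₂.2; have := ht₃.2; linarith)
      calc (∫⁻ s₃ in Ioc t₂ t₃, ∫⁻ s₂ in Ioc t₁ t₂, ∫⁻ s₁ in Ioc (0 : ℝ) t₁,
            ENNReal.ofReal ((t₂ - s₁) ^ (-(d : ℝ) / 2) * (s₃ - s₂) ^ (-(d : ℝ) / 2)))
          ≤ ∫⁻ s₃ in Ioc t₂ t₃, β * ENNReal.ofReal (2 * (s₃ - t₂) ^ (-(1 : ℝ) / 2) + T) :=
            setLIntegral_mono' measurableSet_Ioc step_s₃
        _ = β * ∫⁻ s₃ in Ioc t₂ t₃, ENNReal.ofReal (2 * (s₃ - t₂) ^ (-(1 : ℝ) / 2) + T) :=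
            lintegral_const_mul' _ _ ENNReal.ofReal_ne_top
        _ ≤ β * ENNReal.ofReal K := by
            apply mul_le_mul_right
            exact bound2 t₂ t₃ T ht₂.2 (by have := ht₂.1; have := ht₃.2; linarith)
    calc (∫⁻ t₁ in Ioo (0 : ℝ) t₂, ∫⁻ s₃ in Ioc t₂ t₃, ∫⁻ s₂ in Ioc t₁ t₂,
          ∫⁻ s₁ in Ioc (0 : ℝ) t₁,
            ENNReal.ofReal ((t₂ - s₁) ^ (-(d : ℝ) / 2) * (s₃ - s₂) ^ (-(d : ℝ) / 2)))
        ≤ ∫⁻ t₁ in Ioo (0 : ℝ) t₂,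
            ENNReal.ofReal (2 * (t₂ - t₁) ^ (-(1 : ℝ) / 2) + T) * ENNReal.ofReal K :=
          setLIntegral_mono' measurableSet_Ioo step_t₁
      _ = (∫⁻ t₁ in Ioo (0 : ℝ) t₂,
            ENNReal.ofReal (2 * (t₂ - t₁) ^ (-(1 : ℝ) / 2) + T)) * ENNReal.ofReal K :=
          lintegral_mul_const' _ _ ENNReal.ofReal_ne_top
      _ ≤ C := by
          rw [hCdef]
          apply mul_le_mul_left
          rw [Measure.restrict_congr_set Ioo_ae_eq_Ioc]
          exact bound2' 0 t₂ T ht₂.1.le (by have := ht₂.2; have := ht₃.2; linarith)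
  have step2 : ∀ t₃ ∈ Ioc (0 : ℝ) T,
      (∫⁻ t₂ in Ioc (0 : ℝ) t₃, ∫⁻ t₁ in Ioc (0 : ℝ) t₂, ∫⁻ s₃ in Ioc t₂ t₃,
        ∫⁻ s₂ in Ioc t₁ t₂, ∫⁻ s₁ in Ioc (0 : ℝ) t₁,
          ENNReal.ofReal ((t₂ - s₁) ^ (-(d : ℝ) / 2) * (s₃ - s₂) ^ (-(d : ℝ) / 2)))
        ≤ C * ENNReal.ofReal T := by
    intro t₃ ht₃
    calc _ ≤ ∫⁻ _ in Ioc (0 : ℝ) t₃, C := setLIntegral_mono' measurableSet_Ioc (main t₃ ht₃)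
      _ = C * volume (Ioc (0 : ℝ) t₃) := setLIntegral_const _ _
      _ ≤ C * ENNReal.ofReal T := by
          rw [Real.volume_Ioc, sub_zero]
          exact mul_le_mul_right (ENNReal.ofReal_le_ofReal ht₃.2) _
  have final : (∫⁻ t₃ in Ioc (0 : ℝ) T, ∫⁻ t₂ in Ioc (0 : ℝ) t₃,
      ∫⁻ t₁ in Ioc (0 : ℝ) t₂, ∫⁻ s₃ in Ioc t₂ t₃, ∫⁻ s₂ in Ioc t₁ t₂,
        ∫⁻ s₁ in Ioc (0 : ℝ) t₁,
          ENNReal.ofReal ((t₂ - s₁) ^ (-(d : ℝ) / 2) * (s₃ - s₂) ^ (-(d : ℝ) / 2)))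
      ≤ C * ENNReal.ofReal T * ENNReal.ofReal T := by
    calc _ ≤ ∫⁻ _ in Ioc (0 : ℝ) T, C * ENNReal.ofReal T :=
          setLIntegral_mono' measurableSet_Ioc step2
      _ = C * ENNReal.ofReal T * volume (Ioc (0 : ℝ) T) := setLIntegral_const _ _
      _ ≤ _ := by
          rw [Real.volume_Ioc, sub_zero]
  refine lt_of_le_of_lt final ?_
  refine ENNReal.mul_lt_top (ENNReal.mul_lt_top ?_ ENNReal.ofReal_lt_top) ENNReal.ofReal_lt_top
  exact ENNReal.mul_lt_top ENNReal.ofReal_lt_top ENNReal.ofReal_lt_top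
end

section
/- Let d ∈ {1,2,3} and T > 0. Then the iterated integral ∫₀^T dt₃ ∫₀^{t₃} dt₂ ∫₀^{t₂} dt₁ ∫_{t₁}^{t₂} ds₃ ∫_{t₁}^{s₃} ds₂ ∫₀^{t₁} ds₁ (t₃ − s₁)^{−d/2} [ (t₃ − s₂)^{−d/2} + (t₃ − s₃)^{−d/2} ] is finite. -/
open MeasureTheory

open Set

noncomputable def hpow (x : ℝ) : ℝ := x ^ (-(1/2) : ℝ) + x ^ (-(3/2) : ℝ)

lemma hpow_meas (c : ℝ) : Measurable (fun x : ℝ => ENNReal.ofReal (hpow (c - x))) := by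
  unfold hpow; fun_prop

lemma half_meas (c : ℝ) : Measurable (fun x : ℝ => ENNReal.ofReal ((c - x) ^ (-(1/2):ℝ))) := by
  fun_prop

lemma pow_le_hpow {d : ℕ} (hd1 : 1 ≤ d) (hd3 : d ≤ 3) {x : ℝ} (hx : 0 < x) :
    x ^ (-(d : ℝ)/2) ≤ hpow x := by
  have hd1' : (1:ℝ) ≤ (d:ℝ) := by exact_mod_cast hd1
  have hd3' : (d:ℝ) ≤ 3 := by exact_mod_cast hd3
  rcases le_total x 1 with h | h
  · have h1 : x ^ (-(d:ℝ)/2) ≤ x ^ (-(3/2):ℝ) :=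
      Real.rpow_le_rpow_of_exponent_ge hx h (by linarith)
    exact h1.trans (le_add_of_nonneg_left (Real.rpow_nonneg hx.le _))
  · have h1 : x ^ (-(d:ℝ)/2) ≤ x ^ (-(1/2):ℝ) :=
      Real.rpow_le_rpow_of_exponent_le h (by linarith)
    exact h1.trans (le_add_of_nonneg_right (Real.rpow_nonneg hx.le _))

/-- Generic computation of the set-lintegral of `(c-s)^r` over `Ioc a b`. -/
lemma lint_crpow_eq {a b c r : ℝ} (hab : a ≤ b) (hbc : b ≤ c)
    (hr : -1 < r ∨ r ≠ -1 ∧ (0:ℝ) ∉ uIcc (c - b) (c - a)) :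
    ∫⁻ s in Set.Ioc a b, ENNReal.ofReal ((c - s) ^ r) =
      ENNReal.ofReal (((c - a) ^ (r + 1) - (c - b) ^ (r + 1)) / (r + 1)) := by
  have hII : IntervalIntegrable (fun x : ℝ => x ^ r) volume (c - b) (c - a) := by
    rcases hr with hr | hr
    · exact intervalIntegral.intervalIntegrable_rpow' hr
    · exact intervalIntegral.intervalIntegrable_rpow (Or.inr hr.2)
  have hcomp : IntervalIntegrable (fun s : ℝ => (c - s) ^ r) volume a b := by
    have := (hII.comp_sub_left c).symm
    simpa using this
  have hint : IntegrableOn (fun s : ℝ => (c - s) ^ r) (Set.Ioc a b) :=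
    (intervalIntegrable_iff_integrableOn_Ioc_of_le hab).1 hcomp
  have hnn : 0 ≤ᵐ[volume.restrict (Set.Ioc a b)] fun s : ℝ => (c - s) ^ r := by
    filter_upwards [ae_restrict_mem measurableSet_Ioc] with s hs
    exact Real.rpow_nonneg (by linarith [hs.2]) _
  rw [← ofReal_integral_eq_lintegral_ofReal hint hnn]
  congr 1
  rw [← intervalIntegral.integral_of_le hab,
    intervalIntegral.integral_comp_sub_left (fun x : ℝ => x ^ r) c,
    integral_rpow hr]

lemma lint_half_le {T a b c : ℝ} (ha : 0 ≤ a) (hab : a ≤ b) (hbc : b ≤ c) (hcT : c ≤ T) :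
    ∫⁻ s in Set.Ioc a b, ENNReal.ofReal ((c - s) ^ (-(1/2) : ℝ)) ≤
      ENNReal.ofReal (2 * T ^ ((1:ℝ)/2)) := by
  rw [lint_crpow_eq hab hbc (Or.inl (by norm_num))]
  apply ENNReal.ofReal_le_ofReal
  have h1 : (c - a) ^ (-(1/2) + 1 : ℝ) ≤ T ^ (-(1/2) + 1 : ℝ) :=
    Real.rpow_le_rpow (by linarith) (by linarith) (by norm_num)
  have h2 : 0 ≤ (c - b) ^ (-(1/2) + 1 : ℝ) := Real.rpow_nonneg (by linarith) _
  have h3 : T ^ (-(1/2) + 1 : ℝ) = T ^ ((1:ℝ)/2) := by norm_num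
  rw [h3] at h1
  rw [div_le_iff₀ (by norm_num)]
  nlinarith [Real.rpow_nonneg (show (0:ℝ) ≤ T by linarith) ((1:ℝ)/2)]

lemma lint_threehalf_le {a b c : ℝ} (hab : a ≤ b) (hbc : b < c) :
    ∫⁻ s in Set.Ioc a b, ENNReal.ofReal ((c - s) ^ (-(3/2) : ℝ)) ≤
      ENNReal.ofReal 2 * ENNReal.ofReal ((c - b) ^ (-(1/2) : ℝ)) := by
  have h0b : 0 < c - b := by linarith
  have h0a : 0 < c - a := by linarith
  rw [lint_crpow_eq hab hbc.le (Or.inr ⟨by norm_num, by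
    simp only [Set.mem_uIcc]
    push_neg
    constructor <;> intro h <;> nlinarith⟩)]
  rw [← ENNReal.ofReal_mul (by norm_num)]
  apply ENNReal.ofReal_le_ofReal
  have h2 : 0 ≤ (c - a) ^ (-(3/2) + 1 : ℝ) := Real.rpow_nonneg h0a.le _
  have h3 : (c - b) ^ (-(3/2) + 1 : ℝ) = (c - b) ^ (-(1/2) : ℝ) := by norm_num
  rw [div_le_iff_of_neg (by norm_num : (-(3/2:ℝ) + 1) < 0), h3]
  nlinarith [h2, Real.rpow_nonneg h0b.le (-(1/2) : ℝ)]

lemma lint_hpow_le {T a b c : ℝ} (ha : 0 ≤ a) (hab : a ≤ b) (hbc : b < c) (hcT : c ≤ T) :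
    ∫⁻ s in Set.Ioc a b, ENNReal.ofReal (hpow (c - s)) ≤
      ENNReal.ofReal (2 * T ^ ((1:ℝ)/2)) +
        ENNReal.ofReal 2 * ENNReal.ofReal ((c - b) ^ (-(1/2) : ℝ)) := by
  have step : ∫⁻ s in Set.Ioc a b, ENNReal.ofReal (hpow (c - s)) =
      ∫⁻ s in Set.Ioc a b,
        (ENNReal.ofReal ((c - s) ^ (-(1/2) : ℝ)) + ENNReal.ofReal ((c - s) ^ (-(3/2) : ℝ))) := by
    apply setLIntegral_congr_fun measurableSet_Ioc
    intro s hs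
    have h1 : (0:ℝ) ≤ c - s := by linarith [hs.2]
    exact ENNReal.ofReal_add (Real.rpow_nonneg h1 _) (Real.rpow_nonneg h1 _)
  rw [step, lintegral_add_left (half_meas c)]
  exact add_le_add (lint_half_le ha hab hbc.le hcT) (lint_threehalf_le hab hbc)

lemma hpow_nonneg {x : ℝ} (hx : 0 ≤ x) : 0 ≤ hpow x :=
  add_nonneg (Real.rpow_nonneg hx _) (Real.rpow_nonneg hx _)

lemma lint_add_le {a b : ℝ} {f g : ℝ → ENNReal} (hf : Measurable f) {R S : ENNReal}
    (hI : ∫⁻ x in Set.Ioc a b, f x ≤ R) (hJ : ∫⁻ x in Set.Ioc a b, g x ≤ S) :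
    ∫⁻ x in Set.Ioc a b, (f x + g x) ≤ R + S := by
  rw [lintegral_add_left hf]; exact add_le_add hI hJ

lemma lint_cmul_le {a b : ℝ} {f : ℝ → ENNReal} {Q S : ENNReal} (hQ : Q ≠ ⊤)
    (hI : ∫⁻ x in Set.Ioc a b, f x ≤ S) :
    ∫⁻ x in Set.Ioc a b, Q * f x ≤ Q * S := by
  rw [lintegral_const_mul' _ _ hQ]; exact mul_le_mul_right hI Q

lemma lint_const_le {a b : ℝ} {P R : ENNReal} (h : P * volume (Set.Ioc a b) ≤ R) :
    ∫⁻ _ in Set.Ioc a b, P ≤ R := by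
  rw [setLIntegral_const]; exact h

/-- innermost level: integrate `s₁` over `(0, t₁)`. -/
lemma level1 (d : ℕ) (hd1 : 1 ≤ d) (hd3 : d ≤ 3) {T t₃ t₁ s₂ s₃ : ℝ}
    (ht₁ : 0 < t₁) (h₁₃ : t₁ < t₃) (hs₂ : s₂ < t₃) (hs₃ : s₃ < t₃) (hT : t₃ ≤ T) :
    ∫⁻ s₁ in Set.Ioc 0 t₁,
        ENNReal.ofReal ((t₃ - s₁) ^ (-(d : ℝ) / 2) *
          ((t₃ - s₂) ^ (-(d : ℝ) / 2) + (t₃ - s₃) ^ (-(d : ℝ) / 2)))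
      ≤ (ENNReal.ofReal (2 * T ^ ((1:ℝ)/2)) +
           ENNReal.ofReal 2 * ENNReal.ofReal ((t₃ - t₁) ^ (-(1/2) : ℝ))) *
        (ENNReal.ofReal (hpow (t₃ - s₂)) + ENNReal.ofReal (hpow (t₃ - s₃))) := by
  have h2 : 0 < t₃ - s₂ := by linarith
  have h3 : 0 < t₃ - s₃ := by linarith
  calc ∫⁻ s₁ in Set.Ioc 0 t₁,
        ENNReal.ofReal ((t₃ - s₁) ^ (-(d : ℝ) / 2) *
          ((t₃ - s₂) ^ (-(d : ℝ) / 2) + (t₃ - s₃) ^ (-(d : ℝ) / 2)))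
      ≤ ∫⁻ s₁ in Set.Ioc 0 t₁, ENNReal.ofReal (hpow (t₃ - s₁)) *
          (ENNReal.ofReal (hpow (t₃ - s₂)) + ENNReal.ofReal (hpow (t₃ - s₃))) := by
        apply setLIntegral_mono' measurableSet_Ioc
        intro s₁ hs₁
        have h1 : 0 < t₃ - s₁ := by linarith [hs₁.2]
        rw [ENNReal.ofReal_mul (Real.rpow_nonneg h1.le _)]
        refine mul_le_mul' (ENNReal.ofReal_le_ofReal (pow_le_hpow hd1 hd3 h1)) ?_
        calc ENNReal.ofReal ((t₃ - s₂) ^ (-(d : ℝ) / 2) + (t₃ - s₃) ^ (-(d : ℝ) / 2))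
            ≤ ENNReal.ofReal (hpow (t₃ - s₂) + hpow (t₃ - s₃)) :=
              ENNReal.ofReal_le_ofReal
                (add_le_add (pow_le_hpow hd1 hd3 h2) (pow_le_hpow hd1 hd3 h3))
          _ = _ := ENNReal.ofReal_add (hpow_nonneg h2.le) (hpow_nonneg h3.le)
    _ = (∫⁻ s₁ in Set.Ioc 0 t₁, ENNReal.ofReal (hpow (t₃ - s₁))) *
          (ENNReal.ofReal (hpow (t₃ - s₂)) + ENNReal.ofReal (hpow (t₃ - s₃))) :=
        lintegral_mul_const' _ _ (by
          exact ENNReal.add_ne_top.2 ⟨ENNReal.ofReal_ne_top, ENNReal.ofReal_ne_top⟩)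
    _ ≤ _ := mul_le_mul_left (lint_hpow_le le_rfl ht₁.le h₁₃ hT) _

/-- levels `s₂` then `s₁`. -/
lemma level2 (d : ℕ) (hd1 : 1 ≤ d) (hd3 : d ≤ 3) {T t₃ t₁ s₃ : ℝ}
    (ht₁ : 0 < t₁) (h₁s₃ : t₁ ≤ s₃) (hs₃ : s₃ < t₃) (hT : t₃ ≤ T) :
    ∫⁻ s₂ in Set.Ioc t₁ s₃, ∫⁻ s₁ in Set.Ioc 0 t₁,
        ENNReal.ofReal ((t₃ - s₁) ^ (-(d : ℝ) / 2) *
          ((t₃ - s₂) ^ (-(d : ℝ) / 2) + (t₃ - s₃) ^ (-(d : ℝ) / 2)))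
      ≤ (ENNReal.ofReal (2 * T ^ ((1:ℝ)/2)) +
           ENNReal.ofReal 2 * ENNReal.ofReal ((t₃ - t₁) ^ (-(1/2) : ℝ))) *
        ((ENNReal.ofReal (2 * T ^ ((1:ℝ)/2)) +
            ENNReal.ofReal 2 * ENNReal.ofReal ((t₃ - s₃) ^ (-(1/2) : ℝ))) +
          ENNReal.ofReal T * ENNReal.ofReal (hpow (t₃ - s₃))) := by
  have h₁₃ : t₁ < t₃ := lt_of_le_of_lt h₁s₃ hs₃
  have hAne : (ENNReal.ofReal (2 * T ^ ((1:ℝ)/2)) +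
      ENNReal.ofReal 2 * ENNReal.ofReal ((t₃ - t₁) ^ (-(1/2) : ℝ))) ≠ ⊤ := by
    exact ENNReal.add_ne_top.2 ⟨ENNReal.ofReal_ne_top,
      ENNReal.mul_ne_top ENNReal.ofReal_ne_top ENNReal.ofReal_ne_top⟩
  calc ∫⁻ s₂ in Set.Ioc t₁ s₃, ∫⁻ s₁ in Set.Ioc 0 t₁,
        ENNReal.ofReal ((t₃ - s₁) ^ (-(d : ℝ) / 2) *
          ((t₃ - s₂) ^ (-(d : ℝ) / 2) + (t₃ - s₃) ^ (-(d : ℝ) / 2)))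
      ≤ ∫⁻ s₂ in Set.Ioc t₁ s₃,
          (ENNReal.ofReal (2 * T ^ ((1:ℝ)/2)) +
            ENNReal.ofReal 2 * ENNReal.ofReal ((t₃ - t₁) ^ (-(1/2) : ℝ))) *
          (ENNReal.ofReal (hpow (t₃ - s₂)) + ENNReal.ofReal (hpow (t₃ - s₃))) := by
        apply setLIntegral_mono' measurableSet_Ioc
        intro s₂ hs₂
        exact level1 d hd1 hd3 ht₁ h₁₃ (lt_of_le_of_lt hs₂.2 hs₃) hs₃ hT
    _ = (ENNReal.ofReal (2 * T ^ ((1:ℝ)/2)) +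
          ENNReal.ofReal 2 * ENNReal.ofReal ((t₃ - t₁) ^ (-(1/2) : ℝ))) *
        ∫⁻ s₂ in Set.Ioc t₁ s₃,
          (ENNReal.ofReal (hpow (t₃ - s₂)) + ENNReal.ofReal (hpow (t₃ - s₃))) :=
        lintegral_const_mul' _ _ hAne
    _ ≤ _ := by
        refine mul_le_mul_right ?_ _
        refine lint_add_le (hpow_meas t₃) (lint_hpow_le ht₁.le h₁s₃ hs₃ hT) ?_
        rw [setLIntegral_const, Real.volume_Ioc, mul_comm]
        exact mul_le_mul_left (ENNReal.ofReal_le_ofReal (by linarith)) _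

/-- level `s₃`. -/
lemma level3 (d : ℕ) (hd1 : 1 ≤ d) (hd3 : d ≤ 3) {T t₃ t₂ t₁ : ℝ}
    (ht₁ : 0 < t₁) (h₁₂ : t₁ ≤ t₂) (h₂₃ : t₂ < t₃) (hT : t₃ ≤ T) :
    ∫⁻ s₃ in Set.Ioc t₁ t₂, ∫⁻ s₂ in Set.Ioc t₁ s₃, ∫⁻ s₁ in Set.Ioc 0 t₁,
        ENNReal.ofReal ((t₃ - s₁) ^ (-(d : ℝ) / 2) *
          ((t₃ - s₂) ^ (-(d : ℝ) / 2) + (t₃ - s₃) ^ (-(d : ℝ) / 2)))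
      ≤ (ENNReal.ofReal (2 * T ^ ((1:ℝ)/2)) +
           ENNReal.ofReal 2 * ENNReal.ofReal ((t₃ - t₁) ^ (-(1/2) : ℝ))) *
        ((ENNReal.ofReal (2 * T ^ ((1:ℝ)/2)) * ENNReal.ofReal T +
            ENNReal.ofReal 2 * ENNReal.ofReal (2 * T ^ ((1:ℝ)/2))) +
          ENNReal.ofReal T *
            (ENNReal.ofReal (2 * T ^ ((1:ℝ)/2)) +
              ENNReal.ofReal 2 * ENNReal.ofReal ((t₃ - t₂) ^ (-(1/2) : ℝ)))) := by
  have hAne : (ENNReal.ofReal (2 * T ^ ((1:ℝ)/2)) +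
      ENNReal.ofReal 2 * ENNReal.ofReal ((t₃ - t₁) ^ (-(1/2) : ℝ))) ≠ ⊤ :=
    ENNReal.add_ne_top.2 ⟨ENNReal.ofReal_ne_top,
      ENNReal.mul_ne_top ENNReal.ofReal_ne_top ENNReal.ofReal_ne_top⟩
  calc ∫⁻ s₃ in Set.Ioc t₁ t₂, ∫⁻ s₂ in Set.Ioc t₁ s₃, ∫⁻ s₁ in Set.Ioc 0 t₁,
        ENNReal.ofReal ((t₃ - s₁) ^ (-(d : ℝ) / 2) *
          ((t₃ - s₂) ^ (-(d : ℝ) / 2) + (t₃ - s₃) ^ (-(d : ℝ) / 2)))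
      ≤ ∫⁻ s₃ in Set.Ioc t₁ t₂,
          (ENNReal.ofReal (2 * T ^ ((1:ℝ)/2)) +
            ENNReal.ofReal 2 * ENNReal.ofReal ((t₃ - t₁) ^ (-(1/2) : ℝ))) *
          ((ENNReal.ofReal (2 * T ^ ((1:ℝ)/2)) +
              ENNReal.ofReal 2 * ENNReal.ofReal ((t₃ - s₃) ^ (-(1/2) : ℝ))) +
            ENNReal.ofReal T * ENNReal.ofReal (hpow (t₃ - s₃))) := by
        apply setLIntegral_mono' measurableSet_Ioc
        intro s₃ hs₃
        exact level2 d hd1 hd3 ht₁ hs₃.1.le (lt_of_le_of_lt hs₃.2 h₂₃) hT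
    _ = (ENNReal.ofReal (2 * T ^ ((1:ℝ)/2)) +
          ENNReal.ofReal 2 * ENNReal.ofReal ((t₃ - t₁) ^ (-(1/2) : ℝ))) *
        ∫⁻ s₃ in Set.Ioc t₁ t₂,
          ((ENNReal.ofReal (2 * T ^ ((1:ℝ)/2)) +
              ENNReal.ofReal 2 * ENNReal.ofReal ((t₃ - s₃) ^ (-(1/2) : ℝ))) +
            ENNReal.ofReal T * ENNReal.ofReal (hpow (t₃ - s₃))) :=
        lintegral_const_mul' _ _ hAne
    _ ≤ _ := by
        refine mul_le_mul_right ?_ _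
        refine lint_add_le (by fun_prop [hpow]) ?_ ?_
        · refine lint_add_le measurable_const ?_ ?_
          · refine lint_const_le ?_
            rw [Real.volume_Ioc]
            exact mul_le_mul_right (ENNReal.ofReal_le_ofReal (by linarith)) _
          · exact lint_cmul_le ENNReal.ofReal_ne_top
              (lint_half_le ht₁.le h₁₂ h₂₃.le hT)
        · exact lint_cmul_le ENNReal.ofReal_ne_top
            (lint_hpow_le ht₁.le h₁₂ h₂₃ hT)

/-- level `t₁`. -/
lemma level4 (d : ℕ) (hd1 : 1 ≤ d) (hd3 : d ≤ 3) {T t₃ t₂ : ℝ}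
    (ht₂ : 0 < t₂) (h₂₃ : t₂ < t₃) (hT : t₃ ≤ T) :
    ∫⁻ t₁ in Set.Ioc 0 t₂, ∫⁻ s₃ in Set.Ioc t₁ t₂, ∫⁻ s₂ in Set.Ioc t₁ s₃,
        ∫⁻ s₁ in Set.Ioc 0 t₁,
        ENNReal.ofReal ((t₃ - s₁) ^ (-(d : ℝ) / 2) *
          ((t₃ - s₂) ^ (-(d : ℝ) / 2) + (t₃ - s₃) ^ (-(d : ℝ) / 2)))
      ≤ (ENNReal.ofReal (2 * T ^ ((1:ℝ)/2)) * ENNReal.ofReal T +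
           ENNReal.ofReal 2 * ENNReal.ofReal (2 * T ^ ((1:ℝ)/2))) *
        ((ENNReal.ofReal (2 * T ^ ((1:ℝ)/2)) * ENNReal.ofReal T +
            ENNReal.ofReal 2 * ENNReal.ofReal (2 * T ^ ((1:ℝ)/2))) +
          ENNReal.ofReal T *
            (ENNReal.ofReal (2 * T ^ ((1:ℝ)/2)) +
              ENNReal.ofReal 2 * ENNReal.ofReal ((t₃ - t₂) ^ (-(1/2) : ℝ)))) := by
  have hBne : ((ENNReal.ofReal (2 * T ^ ((1:ℝ)/2)) * ENNReal.ofReal T +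
      ENNReal.ofReal 2 * ENNReal.ofReal (2 * T ^ ((1:ℝ)/2))) +
      ENNReal.ofReal T *
        (ENNReal.ofReal (2 * T ^ ((1:ℝ)/2)) +
          ENNReal.ofReal 2 * ENNReal.ofReal ((t₃ - t₂) ^ (-(1/2) : ℝ)))) ≠ ⊤ := by
    refine ENNReal.add_ne_top.2 ⟨ENNReal.add_ne_top.2
      ⟨ENNReal.mul_ne_top ENNReal.ofReal_ne_top ENNReal.ofReal_ne_top,
       ENNReal.mul_ne_top ENNReal.ofReal_ne_top ENNReal.ofReal_ne_top⟩, ?_⟩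
    exact ENNReal.mul_ne_top ENNReal.ofReal_ne_top
      (ENNReal.add_ne_top.2 ⟨ENNReal.ofReal_ne_top,
        ENNReal.mul_ne_top ENNReal.ofReal_ne_top ENNReal.ofReal_ne_top⟩)
  calc ∫⁻ t₁ in Set.Ioc 0 t₂, ∫⁻ s₃ in Set.Ioc t₁ t₂, ∫⁻ s₂ in Set.Ioc t₁ s₃,
        ∫⁻ s₁ in Set.Ioc 0 t₁,
        ENNReal.ofReal ((t₃ - s₁) ^ (-(d : ℝ) / 2) *
          ((t₃ - s₂) ^ (-(d : ℝ) / 2) + (t₃ - s₃) ^ (-(d : ℝ) / 2)))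
      ≤ ∫⁻ t₁ in Set.Ioc 0 t₂,
          ((ENNReal.ofReal (2 * T ^ ((1:ℝ)/2)) +
             ENNReal.ofReal 2 * ENNReal.ofReal ((t₃ - t₁) ^ (-(1/2) : ℝ))) *
          ((ENNReal.ofReal (2 * T ^ ((1:ℝ)/2)) * ENNReal.ofReal T +
              ENNReal.ofReal 2 * ENNReal.ofReal (2 * T ^ ((1:ℝ)/2))) +
            ENNReal.ofReal T *
              (ENNReal.ofReal (2 * T ^ ((1:ℝ)/2)) +
                ENNReal.ofReal 2 * ENNReal.ofReal ((t₃ - t₂) ^ (-(1/2) : ℝ))))) := by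
        apply setLIntegral_mono' measurableSet_Ioc
        intro t₁ ht₁
        exact level3 d hd1 hd3 ht₁.1 ht₁.2 h₂₃ hT
    _ = (∫⁻ t₁ in Set.Ioc 0 t₂,
          (ENNReal.ofReal (2 * T ^ ((1:ℝ)/2)) +
            ENNReal.ofReal 2 * ENNReal.ofReal ((t₃ - t₁) ^ (-(1/2) : ℝ)))) *
        ((ENNReal.ofReal (2 * T ^ ((1:ℝ)/2)) * ENNReal.ofReal T +
            ENNReal.ofReal 2 * ENNReal.ofReal (2 * T ^ ((1:ℝ)/2))) +
          ENNReal.ofReal T *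
            (ENNReal.ofReal (2 * T ^ ((1:ℝ)/2)) +
              ENNReal.ofReal 2 * ENNReal.ofReal ((t₃ - t₂) ^ (-(1/2) : ℝ)))) :=
        lintegral_mul_const' _ _ hBne
    _ ≤ _ := by
        refine mul_le_mul_left ?_ _
        refine lint_add_le measurable_const ?_ ?_
        · refine lint_const_le ?_
          rw [Real.volume_Ioc]
          exact mul_le_mul_right (ENNReal.ofReal_le_ofReal (by linarith)) _
        · exact lint_cmul_le ENNReal.ofReal_ne_top
            (lint_half_le le_rfl ht₂.le h₂₃.le hT)

/-- level `t₂`. -/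
lemma level5 (d : ℕ) (hd1 : 1 ≤ d) (hd3 : d ≤ 3) {T t₃ : ℝ}
    (ht₃ : 0 < t₃) (hT : t₃ ≤ T) :
    ∫⁻ t₂ in Set.Ioc 0 t₃, ∫⁻ t₁ in Set.Ioc 0 t₂, ∫⁻ s₃ in Set.Ioc t₁ t₂,
        ∫⁻ s₂ in Set.Ioc t₁ s₃, ∫⁻ s₁ in Set.Ioc 0 t₁,
        ENNReal.ofReal ((t₃ - s₁) ^ (-(d : ℝ) / 2) *
          ((t₃ - s₂) ^ (-(d : ℝ) / 2) + (t₃ - s₃) ^ (-(d : ℝ) / 2)))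
      ≤ (ENNReal.ofReal (2 * T ^ ((1:ℝ)/2)) * ENNReal.ofReal T +
           ENNReal.ofReal 2 * ENNReal.ofReal (2 * T ^ ((1:ℝ)/2))) *
        ((ENNReal.ofReal (2 * T ^ ((1:ℝ)/2)) * ENNReal.ofReal T +
            ENNReal.ofReal 2 * ENNReal.ofReal (2 * T ^ ((1:ℝ)/2))) * ENNReal.ofReal T +
          ENNReal.ofReal T *
            (ENNReal.ofReal (2 * T ^ ((1:ℝ)/2)) * ENNReal.ofReal T +
              ENNReal.ofReal 2 * ENNReal.ofReal (2 * T ^ ((1:ℝ)/2)))) := by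
  have hFne : (ENNReal.ofReal (2 * T ^ ((1:ℝ)/2)) * ENNReal.ofReal T +
      ENNReal.ofReal 2 * ENNReal.ofReal (2 * T ^ ((1:ℝ)/2))) ≠ ⊤ := by finiteness
  calc ∫⁻ t₂ in Set.Ioc 0 t₃, ∫⁻ t₁ in Set.Ioc 0 t₂, ∫⁻ s₃ in Set.Ioc t₁ t₂,
        ∫⁻ s₂ in Set.Ioc t₁ s₃, ∫⁻ s₁ in Set.Ioc 0 t₁,
        ENNReal.ofReal ((t₃ - s₁) ^ (-(d : ℝ) / 2) *
          ((t₃ - s₂) ^ (-(d : ℝ) / 2) + (t₃ - s₃) ^ (-(d : ℝ) / 2)))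
      = ∫⁻ t₂ in Set.Ioo 0 t₃, ∫⁻ t₁ in Set.Ioc 0 t₂, ∫⁻ s₃ in Set.Ioc t₁ t₂,
        ∫⁻ s₂ in Set.Ioc t₁ s₃, ∫⁻ s₁ in Set.Ioc 0 t₁,
        ENNReal.ofReal ((t₃ - s₁) ^ (-(d : ℝ) / 2) *
          ((t₃ - s₂) ^ (-(d : ℝ) / 2) + (t₃ - s₃) ^ (-(d : ℝ) / 2))) :=
        (setLIntegral_congr MeasureTheory.Ioo_ae_eq_Ioc).symm
    _ ≤ ∫⁻ t₂ in Set.Ioo 0 t₃,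
          ((ENNReal.ofReal (2 * T ^ ((1:ℝ)/2)) * ENNReal.ofReal T +
             ENNReal.ofReal 2 * ENNReal.ofReal (2 * T ^ ((1:ℝ)/2))) *
          ((ENNReal.ofReal (2 * T ^ ((1:ℝ)/2)) * ENNReal.ofReal T +
              ENNReal.ofReal 2 * ENNReal.ofReal (2 * T ^ ((1:ℝ)/2))) +
            ENNReal.ofReal T *
              (ENNReal.ofReal (2 * T ^ ((1:ℝ)/2)) +
                ENNReal.ofReal 2 * ENNReal.ofReal ((t₃ - t₂) ^ (-(1/2) : ℝ))))) := by
        apply setLIntegral_mono' measurableSet_Ioo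
        intro t₂ ht₂
        exact level4 d hd1 hd3 ht₂.1 ht₂.2 hT
    _ = ∫⁻ t₂ in Set.Ioc 0 t₃,
          ((ENNReal.ofReal (2 * T ^ ((1:ℝ)/2)) * ENNReal.ofReal T +
             ENNReal.ofReal 2 * ENNReal.ofReal (2 * T ^ ((1:ℝ)/2))) *
          ((ENNReal.ofReal (2 * T ^ ((1:ℝ)/2)) * ENNReal.ofReal T +
              ENNReal.ofReal 2 * ENNReal.ofReal (2 * T ^ ((1:ℝ)/2))) +
            ENNReal.ofReal T *
              (ENNReal.ofReal (2 * T ^ ((1:ℝ)/2)) +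
                ENNReal.ofReal 2 * ENNReal.ofReal ((t₃ - t₂) ^ (-(1/2) : ℝ))))) :=
        setLIntegral_congr MeasureTheory.Ioo_ae_eq_Ioc
    _ = (ENNReal.ofReal (2 * T ^ ((1:ℝ)/2)) * ENNReal.ofReal T +
           ENNReal.ofReal 2 * ENNReal.ofReal (2 * T ^ ((1:ℝ)/2))) *
        ∫⁻ t₂ in Set.Ioc 0 t₃,
          ((ENNReal.ofReal (2 * T ^ ((1:ℝ)/2)) * ENNReal.ofReal T +
              ENNReal.ofReal 2 * ENNReal.ofReal (2 * T ^ ((1:ℝ)/2))) +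
            ENNReal.ofReal T *
              (ENNReal.ofReal (2 * T ^ ((1:ℝ)/2)) +
                ENNReal.ofReal 2 * ENNReal.ofReal ((t₃ - t₂) ^ (-(1/2) : ℝ)))) :=
        lintegral_const_mul' _ _ hFne
    _ ≤ _ := by
        refine mul_le_mul_right ?_ _
        refine lint_add_le measurable_const ?_ ?_
        · refine lint_const_le ?_
          rw [Real.volume_Ioc]
          exact mul_le_mul_right (ENNReal.ofReal_le_ofReal (by linarith)) _
        · refine lint_cmul_le ENNReal.ofReal_ne_top ?_
          refine lint_add_le measurable_const ?_ ?_
          · refine lint_const_le ?_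
            rw [Real.volume_Ioc]
            exact mul_le_mul_right (ENNReal.ofReal_le_ofReal (by linarith)) _
          · exact lint_cmul_le ENNReal.ofReal_ne_top
              (lint_half_le le_rfl ht₃.le le_rfl hT)

/-- For `d ∈ {1,2,3}` and `T > 0`, the iterated Lebesgue integral
`∫₀^T dt₃ ∫₀^{t₃} dt₂ ∫₀^{t₂} dt₁ ∫_{t₁}^{t₂} ds₃ ∫_{t₁}^{s₃} ds₂ ∫₀^{t₁} ds₁
  (t₃-s₁)^{-d/2} [(t₃-s₂)^{-d/2} + (t₃-s₃)^{-d/2}]` is finite. -/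
theorem iterated_singular_integral_finite_IV (d : ℕ) (hd1 : 1 ≤ d) (hd3 : d ≤ 3)
    (T : ℝ) (hT : 0 < T) :
    (∫⁻ t₃ in Set.Ioc (0 : ℝ) T, ∫⁻ t₂ in Set.Ioc (0 : ℝ) t₃, ∫⁻ t₁ in Set.Ioc (0 : ℝ) t₂,
      ∫⁻ s₃ in Set.Ioc t₁ t₂, ∫⁻ s₂ in Set.Ioc t₁ s₃, ∫⁻ s₁ in Set.Ioc (0 : ℝ) t₁,
        ENNReal.ofReal ((t₃ - s₁) ^ (-(d : ℝ) / 2) *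
          ((t₃ - s₂) ^ (-(d : ℝ) / 2) + (t₃ - s₃) ^ (-(d : ℝ) / 2)))) < ⊤ := by

  have key : (∫⁻ t₃ in Set.Ioc (0 : ℝ) T, ∫⁻ t₂ in Set.Ioc (0 : ℝ) t₃,
      ∫⁻ t₁ in Set.Ioc (0 : ℝ) t₂,
      ∫⁻ s₃ in Set.Ioc t₁ t₂, ∫⁻ s₂ in Set.Ioc t₁ s₃, ∫⁻ s₁ in Set.Ioc (0 : ℝ) t₁,
        ENNReal.ofReal ((t₃ - s₁) ^ (-(d : ℝ) / 2) *
          ((t₃ - s₂) ^ (-(d : ℝ) / 2) + (t₃ - s₃) ^ (-(d : ℝ) / 2)))) ≤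
      ∫⁻ _ in Set.Ioc (0 : ℝ) T,
        ((ENNReal.ofReal (2 * T ^ ((1:ℝ)/2)) * ENNReal.ofReal T +
           ENNReal.ofReal 2 * ENNReal.ofReal (2 * T ^ ((1:ℝ)/2))) *
        ((ENNReal.ofReal (2 * T ^ ((1:ℝ)/2)) * ENNReal.ofReal T +
            ENNReal.ofReal 2 * ENNReal.ofReal (2 * T ^ ((1:ℝ)/2))) * ENNReal.ofReal T +
          ENNReal.ofReal T *
            (ENNReal.ofReal (2 * T ^ ((1:ℝ)/2)) * ENNReal.ofReal T +
              ENNReal.ofReal 2 * ENNReal.ofReal (2 * T ^ ((1:ℝ)/2))))) := by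
    apply setLIntegral_mono' measurableSet_Ioc
    intro t₃ ht₃
    exact level5 d hd1 hd3 ht₃.1 ht₃.2
  refine lt_of_le_of_lt key ?_
  rw [setLIntegral_const, Real.volume_Ioc]
  refine ENNReal.mul_lt_top (ENNReal.mul_lt_top ?_ ?_) ENNReal.ofReal_lt_top
  · exact ENNReal.add_lt_top.2 ⟨ENNReal.mul_lt_top ENNReal.ofReal_lt_top ENNReal.ofReal_lt_top,
      ENNReal.mul_lt_top ENNReal.ofReal_lt_top ENNReal.ofReal_lt_top⟩
  · refine ENNReal.add_lt_top.2 ⟨ENNReal.mul_lt_top (ENNReal.add_lt_top.2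
      ⟨ENNReal.mul_lt_top ENNReal.ofReal_lt_top ENNReal.ofReal_lt_top,
       ENNReal.mul_lt_top ENNReal.ofReal_lt_top ENNReal.ofReal_lt_top⟩) ENNReal.ofReal_lt_top,
      ENNReal.mul_lt_top ENNReal.ofReal_lt_top (ENNReal.add_lt_top.2
      ⟨ENNReal.mul_lt_top ENNReal.ofReal_lt_top ENNReal.ofReal_lt_top,
       ENNReal.mul_lt_top ENNReal.ofReal_lt_top ENNReal.ofReal_lt_top⟩)⟩
end

section
/- Let d ∈ {1,2,3} and T > 0. Then for k ∈ {1,2}, the iterated integral ∫₀^T dt₃ ∫₀^{t₃} dt₂ ∫₀^{t₂} dt₁ ∫_{t₁}^{t₂} ds₃ ∫₀^{t₁} ds₂ ∫₀^{s₂} ds₁ (t₃ − s₃)^{−d/2} [ (t₃ − s_k)^{−d/2} + (t₂ − s_k)^{−d/2} ] is finite. -/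
open MeasureTheory

private lemma lioc (a b : ℝ) (f : ℝ → ENNReal) :
    ∫⁻ x in Set.Ioc a b, f x = ∫⁻ x in Set.Ioo a b, f x :=
  (setLIntegral_congr Ioo_ae_eq_Ioc).symm

private lemma split_rpow {A B r : ℝ} (hA : 0 < A) (hB : 0 < B) (hr : 0 ≤ r) :
    (A + B) ^ (-(2 * r)) ≤ A ^ (-r) * B ^ (-r) := by
  have hAB : (0:ℝ) < A + B := by linarith
  have h2 : A * B ≤ (A + B) ^ (2:ℝ) := by
    rw [show ((2:ℝ)) = ((2:ℕ):ℝ) by norm_num, Real.rpow_natCast]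
    nlinarith
  calc (A + B) ^ (-(2 * r)) = ((A + B) ^ (2:ℝ)) ^ (-r) := by
        rw [← Real.rpow_mul hAB.le]; ring_nf
    _ ≤ (A * B) ^ (-r) :=
        Real.rpow_le_rpow_of_nonpos (mul_pos hA hB) h2 (neg_nonpos.mpr hr)
    _ = A ^ (-r) * B ^ (-r) := Real.mul_rpow hA.le hB.le

private lemma key1d {r M : ℝ} (hr0 : 0 ≤ r) (hr1 : r < 1) (hM : 1 ≤ M)
    {a b c : ℝ} (hbc : b ≤ c) (hba : b - a ≤ M) :
    ∫⁻ x in Set.Ioo a b, ENNReal.ofReal ((c - x) ^ (-r)) ≤ ENNReal.ofReal (M / (1 - r)) := by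
  rcases le_or_gt b a with h | h
  · rw [Set.Ioo_eq_empty (not_lt.mpr h), Measure.restrict_empty, lintegral_zero_measure]
    exact zero_le
  have h1r : (0:ℝ) < 1 - r := by linarith
  have hmono : ∫⁻ x in Set.Ioo a b, ENNReal.ofReal ((c - x) ^ (-r))
      ≤ ∫⁻ x in Set.Ioo a b, ENNReal.ofReal ((b - x) ^ (-r)) :=
    setLIntegral_mono' measurableSet_Ioo fun x hx =>
      ENNReal.ofReal_le_ofReal
        (Real.rpow_le_rpow_of_nonpos (by linarith [hx.2]) (by linarith) (neg_nonpos.mpr hr0))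
  refine hmono.trans ?_
  have hii : IntervalIntegrable (fun x : ℝ => (b - x) ^ (-r)) volume a b := by
    have h0 : IntervalIntegrable (fun y : ℝ => y ^ (-r)) volume (b - b) (b - a) :=
      intervalIntegral.intervalIntegrable_rpow' (by linarith)
    simpa using (h0.comp_sub_left b).symm
  have hIntOn : IntegrableOn (fun x : ℝ => (b - x) ^ (-r)) (Set.Ioo a b) :=
    ((intervalIntegrable_iff_integrableOn_Ioo_of_le h.le).mp hii)
  have hnn : 0 ≤ᵐ[volume.restrict (Set.Ioo a b)] fun x : ℝ => (b - x) ^ (-r) :=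
    (ae_restrict_iff' measurableSet_Ioo).mpr (Filter.Eventually.of_forall fun x hx =>
      Real.rpow_nonneg (by linarith [hx.2]) _)
  rw [← MeasureTheory.ofReal_integral_eq_lintegral_ofReal hIntOn hnn]
  apply ENNReal.ofReal_le_ofReal
  have hval : ∫ x in Set.Ioo a b, (b - x) ^ (-r) = (b - a) ^ (-r + 1) / (-r + 1) := by
    rw [← integral_Ioc_eq_integral_Ioo, ← intervalIntegral.integral_of_le h.le,
      intervalIntegral.integral_comp_sub_left (fun y : ℝ => y ^ (-r)) b, sub_self,
      integral_rpow (Or.inl (by linarith)), Real.zero_rpow (by linarith : -r + 1 ≠ 0), sub_zero]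
  rw [hval]
  have h1 : (b - a) ^ (-r + 1) ≤ M := by
    calc (b - a) ^ (-r + 1) ≤ M ^ (-r + 1) :=
          Real.rpow_le_rpow (by linarith) hba (by linarith)
      _ ≤ M ^ (1:ℝ) := Real.rpow_le_rpow_of_exponent_le hM (by linarith)
      _ = M := Real.rpow_one M
  rw [show (1:ℝ) - r = -r + 1 by ring]
  exact (div_le_div_iff_of_pos_right (by linarith)).mpr h1

private lemma keyconst {M : ℝ} {a b : ℝ} (hba : b - a ≤ M) (v : ENNReal) :
    ∫⁻ _ in Set.Ioo a b, v ≤ ENNReal.ofReal M * v := by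
  rw [setLIntegral_const, Real.volume_Ioo, mul_comm]
  exact mul_le_mul_left (ENNReal.ofReal_le_ofReal hba) v

private lemma strip {μ : Measure ℝ} {f : ℝ → ENNReal} {v u : ENNReal} (hu : u ≠ ⊤)
    (h : ∫⁻ x, f x ∂μ ≤ v) : ∫⁻ x, u * f x ∂μ ≤ u * v := by
  rw [lintegral_const_mul' u f hu]; exact mul_le_mul_right h u

private lemma base {μ : Measure ℝ} {f : ℝ → ENNReal} {v w : ENNReal} (hw : w ≠ ⊤)
    (h : ∫⁻ x, f x ∂μ ≤ v) : ∫⁻ x, f x * w ∂μ ≤ v * w := by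
  rw [lintegral_mul_const' w f hw]; exact mul_le_mul_left h w

/-- For `d ∈ {1,2,3}`, `T > 0` and `k ∈ {1,2}`, the iterated Lebesgue
integral `∫₀^T dt₃ ∫₀^{t₃} dt₂ ∫₀^{t₂} dt₁ ∫_{t₁}^{t₂} ds₃ ∫₀^{t₁} ds₂ ∫₀^{s₂} ds₁
  (t₃-s₃)^{-d/2} [(t₃-s_k)^{-d/2} + (t₂-s_k)^{-d/2}]` is finite, where `s_k = s₁` for
`k = 1` and `s_k = s₂` for `k = 2`.  We state both cases as a conjunction. -/
theorem iterated_singular_integral_finite_V (d : ℕ) (hd1 : 1 ≤ d) (hd3 : d ≤ 3)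
    (T : ℝ) (hT : 0 < T) :
    ((∫⁻ t₃ in Set.Ioc (0 : ℝ) T, ∫⁻ t₂ in Set.Ioc (0 : ℝ) t₃, ∫⁻ t₁ in Set.Ioc (0 : ℝ) t₂,
      ∫⁻ s₃ in Set.Ioc t₁ t₂, ∫⁻ s₂ in Set.Ioc (0 : ℝ) t₁, ∫⁻ s₁ in Set.Ioc (0 : ℝ) s₂,
        ENNReal.ofReal ((t₃ - s₃) ^ (-(d : ℝ) / 2) *
          ((t₃ - s₁) ^ (-(d : ℝ) / 2) + (t₂ - s₁) ^ (-(d : ℝ) / 2)))) < ⊤) ∧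
    ((∫⁻ t₃ in Set.Ioc (0 : ℝ) T, ∫⁻ t₂ in Set.Ioc (0 : ℝ) t₃, ∫⁻ t₁ in Set.Ioc (0 : ℝ) t₂,
      ∫⁻ s₃ in Set.Ioc t₁ t₂, ∫⁻ s₂ in Set.Ioc (0 : ℝ) t₁, ∫⁻ s₁ in Set.Ioc (0 : ℝ) s₂,
        ENNReal.ofReal ((t₃ - s₃) ^ (-(d : ℝ) / 2) *
          ((t₃ - s₂) ^ (-(d : ℝ) / 2) + (t₂ - s₂) ^ (-(d : ℝ) / 2)))) < ⊤) := by
  have hd0 : (1:ℝ) ≤ (d:ℝ) := by exact_mod_cast hd1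
  have hd3' : (d:ℝ) ≤ 3 := by exact_mod_cast hd3
  set r : ℝ := (d:ℝ) / 4 with hr_def
  have hr0 : 0 ≤ r := by rw [hr_def]; positivity
  have hr1 : r < 1 := by rw [hr_def]; linarith
  have hq : -(d : ℝ) / 2 = -(2 * r) := by rw [hr_def]; ring
  set M : ℝ := max 1 T with hM_def
  have hM1 : (1:ℝ) ≤ M := le_max_left _ _
  have hTM : T ≤ M := le_max_right _ _
  have hCt : ENNReal.ofReal (M / (1 - r)) ≠ ⊤ := ENNReal.ofReal_ne_top
  have hKt : ENNReal.ofReal M ≠ ⊤ := ENNReal.ofReal_ne_top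
  have two_ne : ENNReal.ofReal 2 ≠ ⊤ := ENNReal.ofReal_ne_top
  have hfin : (ENNReal.ofReal M) * ((ENNReal.ofReal M) * ((ENNReal.ofReal (M / (1 - r))) * ((ENNReal.ofReal (M / (1 - r))) * ((ENNReal.ofReal (M / (1 - r))) * ((ENNReal.ofReal (M / (1 - r))) * ENNReal.ofReal 2))))) < ⊤ := by
    refine ENNReal.mul_lt_top hKt.lt_top ?_
    refine ENNReal.mul_lt_top hKt.lt_top ?_
    refine ENNReal.mul_lt_top hCt.lt_top ?_
    refine ENNReal.mul_lt_top hCt.lt_top ?_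
    refine ENNReal.mul_lt_top hCt.lt_top ?_
    exact ENNReal.mul_lt_top hCt.lt_top two_ne.lt_top
  constructor
  · -- k = 1
    simp only [hq, lioc]
    refine lt_of_le_of_lt ?_ hfin
    refine le_trans (setLIntegral_mono' measurableSet_Ioo fun t₃ ht₃ => ?_)
      (keyconst (by linarith : T - 0 ≤ M) _)
    obtain ⟨ht₃0, ht₃T⟩ := ht₃
    refine le_trans
      (b := ∫⁻ t₂ in Set.Ioo (0:ℝ) t₃,
        (ENNReal.ofReal M) * ((ENNReal.ofReal (M / (1 - r))) * ((ENNReal.ofReal (M / (1 - r))) * ((ENNReal.ofReal (M / (1 - r))) * (ENNReal.ofReal ((t₃ - t₂) ^ (-r)) * ENNReal.ofReal 2)))))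
      (setLIntegral_mono' measurableSet_Ioo fun t₂ ht₂ => ?_)
      (strip hKt (strip hCt (strip hCt (strip hCt (base two_ne
        (key1d hr0 hr1 hM1 le_rfl (by linarith : t₃ - 0 ≤ M)))))))
    obtain ⟨ht₂0, ht₂3⟩ := ht₂
    refine le_trans
      (b := ∫⁻ t₁ in Set.Ioo (0:ℝ) t₂,
        (ENNReal.ofReal (M / (1 - r))) * ((ENNReal.ofReal (M / (1 - r))) * ((ENNReal.ofReal (M / (1 - r))) * (ENNReal.ofReal ((t₃ - t₂) ^ (-r)) * ENNReal.ofReal 2))))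
      (setLIntegral_mono' measurableSet_Ioo fun t₁ ht₁ => ?_)
      (keyconst (by linarith : t₂ - 0 ≤ M) _)
    obtain ⟨ht₁0, ht₁2⟩ := ht₁
    refine le_trans
      (b := ∫⁻ s₃ in Set.Ioo t₁ t₂,
        (ENNReal.ofReal (M / (1 - r))) * ((ENNReal.ofReal (M / (1 - r))) * (ENNReal.ofReal ((t₂ - s₃) ^ (-r)) *
          (ENNReal.ofReal ((t₃ - t₂) ^ (-r)) * ENNReal.ofReal 2))))
      (setLIntegral_mono' measurableSet_Ioo fun s₃ hs₃ => ?_)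
      (strip hCt (strip hCt (base (by exact ENNReal.mul_ne_top ENNReal.ofReal_ne_top two_ne)
        (key1d hr0 hr1 hM1 le_rfl (by linarith : t₂ - t₁ ≤ M)))))
    obtain ⟨hs₃1, hs₃2⟩ := hs₃
    refine le_trans
      (b := ∫⁻ s₂ in Set.Ioo (0:ℝ) t₁,
        (ENNReal.ofReal (M / (1 - r))) * (ENNReal.ofReal ((t₂ - s₂) ^ (-r)) * (ENNReal.ofReal ((t₂ - s₃) ^ (-r)) *
          (ENNReal.ofReal ((t₃ - t₂) ^ (-r)) * ENNReal.ofReal 2))))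
      (setLIntegral_mono' measurableSet_Ioo fun s₂ hs₂ => ?_)
      (strip hCt (base (by
          exact ENNReal.mul_ne_top ENNReal.ofReal_ne_top
            (ENNReal.mul_ne_top ENNReal.ofReal_ne_top two_ne))
        (key1d hr0 hr1 hM1 (by linarith : t₁ ≤ t₂) (by linarith : t₁ - 0 ≤ M))))
    obtain ⟨hs₂0, hs₂1⟩ := hs₂
    refine le_trans
      (b := ∫⁻ s₁ in Set.Ioo (0:ℝ) s₂,
        ENNReal.ofReal ((s₂ - s₁) ^ (-r)) * (ENNReal.ofReal ((t₂ - s₂) ^ (-r)) *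
          (ENNReal.ofReal ((t₂ - s₃) ^ (-r)) *
            (ENNReal.ofReal ((t₃ - t₂) ^ (-r)) * ENNReal.ofReal 2))))
      (setLIntegral_mono' measurableSet_Ioo fun s₁ hs₁ => ?_)
      (base (by
          exact ENNReal.mul_ne_top ENNReal.ofReal_ne_top
            (ENNReal.mul_ne_top ENNReal.ofReal_ne_top
              (ENNReal.mul_ne_top ENNReal.ofReal_ne_top two_ne)))
        (key1d hr0 hr1 hM1 le_rfl (by linarith : s₂ - 0 ≤ M)))
    obtain ⟨hs₁0, hs₁2⟩ := hs₁
    -- pointwise bound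
    have p1 : (0:ℝ) < t₃ - t₂ := by linarith
    have p2 : (0:ℝ) < t₂ - s₃ := by linarith
    have p3 : (0:ℝ) < t₂ - s₂ := by linarith
    have p4 : (0:ℝ) < s₂ - s₁ := by linarith
    have p5 : (0:ℝ) < t₂ - s₁ := by linarith
    have h1 : (t₃ - s₃) ^ (-(2 * r)) ≤ (t₃ - t₂) ^ (-r) * (t₂ - s₃) ^ (-r) := by
      have := split_rpow p1 p2 hr0
      rwa [show t₃ - t₂ + (t₂ - s₃) = t₃ - s₃ by ring] at this
    have h2 : (t₂ - s₁) ^ (-(2 * r)) ≤ (t₂ - s₂) ^ (-r) * (s₂ - s₁) ^ (-r) := by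
      have := split_rpow p3 p4 hr0
      rwa [show t₂ - s₂ + (s₂ - s₁) = t₂ - s₁ by ring] at this
    have h3 : (t₃ - s₁) ^ (-(2 * r)) ≤ (t₂ - s₁) ^ (-(2 * r)) :=
      Real.rpow_le_rpow_of_nonpos p5 (by linarith) (neg_nonpos.mpr (by positivity))
    have hprod : (t₃ - s₃) ^ (-(2 * r)) * ((t₃ - s₁) ^ (-(2 * r)) + (t₂ - s₁) ^ (-(2 * r)))
        ≤ ((t₃ - t₂) ^ (-r) * (t₂ - s₃) ^ (-r)) *
          (2 * ((t₂ - s₂) ^ (-r) * (s₂ - s₁) ^ (-r))) := by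
      refine mul_le_mul h1 (by linarith) ?_ ?_
      · have a1 : (0:ℝ) ≤ (t₃ - s₁) ^ (-(2 * r)) := Real.rpow_nonneg (by linarith) _
        have a2 : (0:ℝ) ≤ (t₂ - s₁) ^ (-(2 * r)) := Real.rpow_nonneg p5.le _
        linarith
      · exact mul_nonneg (Real.rpow_nonneg p1.le _) (Real.rpow_nonneg p2.le _)
    calc ENNReal.ofReal ((t₃ - s₃) ^ (-(2 * r)) *
            ((t₃ - s₁) ^ (-(2 * r)) + (t₂ - s₁) ^ (-(2 * r))))
        ≤ ENNReal.ofReal ((s₂ - s₁) ^ (-r) * ((t₂ - s₂) ^ (-r) *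
            ((t₂ - s₃) ^ (-r) * ((t₃ - t₂) ^ (-r) * 2)))) := by
          refine ENNReal.ofReal_le_ofReal (hprod.trans_eq (by ring))
      _ = ENNReal.ofReal ((s₂ - s₁) ^ (-r)) * (ENNReal.ofReal ((t₂ - s₂) ^ (-r)) *
            (ENNReal.ofReal ((t₂ - s₃) ^ (-r)) *
              (ENNReal.ofReal ((t₃ - t₂) ^ (-r)) * ENNReal.ofReal 2))) := by
          rw [ENNReal.ofReal_mul (Real.rpow_nonneg p4.le _),
            ENNReal.ofReal_mul (Real.rpow_nonneg p3.le _),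
            ENNReal.ofReal_mul (Real.rpow_nonneg p2.le _),
            ENNReal.ofReal_mul (Real.rpow_nonneg p1.le _)]
  · -- k = 2
    simp only [hq, lioc]
    refine lt_of_le_of_lt ?_ hfin
    refine le_trans (setLIntegral_mono' measurableSet_Ioo fun t₃ ht₃ => ?_)
      (keyconst (by linarith : T - 0 ≤ M) _)
    obtain ⟨ht₃0, ht₃T⟩ := ht₃
    refine le_trans
      (b := ∫⁻ t₂ in Set.Ioo (0:ℝ) t₃,
        (ENNReal.ofReal M) * ((ENNReal.ofReal (M / (1 - r))) * ((ENNReal.ofReal (M / (1 - r))) * ((ENNReal.ofReal (M / (1 - r))) * (ENNReal.ofReal ((t₃ - t₂) ^ (-r)) * ENNReal.ofReal 2)))))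
      (setLIntegral_mono' measurableSet_Ioo fun t₂ ht₂ => ?_)
      (strip hKt (strip hCt (strip hCt (strip hCt (base two_ne
        (key1d hr0 hr1 hM1 le_rfl (by linarith : t₃ - 0 ≤ M)))))))
    obtain ⟨ht₂0, ht₂3⟩ := ht₂
    refine le_trans
      (b := ∫⁻ t₁ in Set.Ioo (0:ℝ) t₂,
        (ENNReal.ofReal M) * ((ENNReal.ofReal (M / (1 - r))) * ((ENNReal.ofReal (M / (1 - r))) * (ENNReal.ofReal ((t₂ - t₁) ^ (-r)) *
          (ENNReal.ofReal ((t₃ - t₂) ^ (-r)) * ENNReal.ofReal 2)))))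
      (setLIntegral_mono' measurableSet_Ioo fun t₁ ht₁ => ?_)
      (strip hKt (strip hCt (strip hCt (base (by
          exact ENNReal.mul_ne_top ENNReal.ofReal_ne_top two_ne)
        (key1d hr0 hr1 hM1 le_rfl (by linarith : t₂ - 0 ≤ M))))))
    obtain ⟨ht₁0, ht₁2⟩ := ht₁
    refine le_trans
      (b := ∫⁻ s₃ in Set.Ioo t₁ t₂,
        (ENNReal.ofReal M) * ((ENNReal.ofReal (M / (1 - r))) * (ENNReal.ofReal ((t₂ - s₃) ^ (-r)) * (ENNReal.ofReal ((t₂ - t₁) ^ (-r)) *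
          (ENNReal.ofReal ((t₃ - t₂) ^ (-r)) * ENNReal.ofReal 2)))))
      (setLIntegral_mono' measurableSet_Ioo fun s₃ hs₃ => ?_)
      (strip hKt (strip hCt (base (by
          exact ENNReal.mul_ne_top ENNReal.ofReal_ne_top
            (ENNReal.mul_ne_top ENNReal.ofReal_ne_top two_ne))
        (key1d hr0 hr1 hM1 le_rfl (by linarith : t₂ - t₁ ≤ M)))))
    obtain ⟨hs₃1, hs₃2⟩ := hs₃
    refine le_trans
      (b := ∫⁻ s₂ in Set.Ioo (0:ℝ) t₁,
        (ENNReal.ofReal M) * (ENNReal.ofReal ((t₁ - s₂) ^ (-r)) * (ENNReal.ofReal ((t₂ - s₃) ^ (-r)) *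
          (ENNReal.ofReal ((t₂ - t₁) ^ (-r)) *
            (ENNReal.ofReal ((t₃ - t₂) ^ (-r)) * ENNReal.ofReal 2)))))
      (setLIntegral_mono' measurableSet_Ioo fun s₂ hs₂ => ?_)
      (strip hKt (base (by
          exact ENNReal.mul_ne_top ENNReal.ofReal_ne_top
            (ENNReal.mul_ne_top ENNReal.ofReal_ne_top
              (ENNReal.mul_ne_top ENNReal.ofReal_ne_top two_ne)))
        (key1d hr0 hr1 hM1 le_rfl (by linarith : t₁ - 0 ≤ M))))
    obtain ⟨hs₂0, hs₂1⟩ := hs₂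
    refine le_trans
      (b := ∫⁻ _ in Set.Ioo (0:ℝ) s₂,
        ENNReal.ofReal ((t₁ - s₂) ^ (-r)) * (ENNReal.ofReal ((t₂ - s₃) ^ (-r)) *
          (ENNReal.ofReal ((t₂ - t₁) ^ (-r)) *
            (ENNReal.ofReal ((t₃ - t₂) ^ (-r)) * ENNReal.ofReal 2))))
      (setLIntegral_mono' measurableSet_Ioo fun s₁ hs₁ => ?_)
      (keyconst (by linarith : s₂ - 0 ≤ M) _)
    obtain ⟨hs₁0, hs₁2⟩ := hs₁
    -- pointwise bound
    have p1 : (0:ℝ) < t₃ - t₂ := by linarith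
    have p2 : (0:ℝ) < t₂ - s₃ := by linarith
    have p3 : (0:ℝ) < t₂ - t₁ := by linarith
    have p4 : (0:ℝ) < t₁ - s₂ := by linarith
    have p5 : (0:ℝ) < t₂ - s₂ := by linarith
    have h1 : (t₃ - s₃) ^ (-(2 * r)) ≤ (t₃ - t₂) ^ (-r) * (t₂ - s₃) ^ (-r) := by
      have := split_rpow p1 p2 hr0
      rwa [show t₃ - t₂ + (t₂ - s₃) = t₃ - s₃ by ring] at this
    have h2 : (t₂ - s₂) ^ (-(2 * r)) ≤ (t₂ - t₁) ^ (-r) * (t₁ - s₂) ^ (-r) := by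
      have := split_rpow p3 p4 hr0
      rwa [show t₂ - t₁ + (t₁ - s₂) = t₂ - s₂ by ring] at this
    have h3 : (t₃ - s₂) ^ (-(2 * r)) ≤ (t₂ - s₂) ^ (-(2 * r)) :=
      Real.rpow_le_rpow_of_nonpos p5 (by linarith) (neg_nonpos.mpr (by positivity))
    have hprod : (t₃ - s₃) ^ (-(2 * r)) * ((t₃ - s₂) ^ (-(2 * r)) + (t₂ - s₂) ^ (-(2 * r)))
        ≤ ((t₃ - t₂) ^ (-r) * (t₂ - s₃) ^ (-r)) *
          (2 * ((t₂ - t₁) ^ (-r) * (t₁ - s₂) ^ (-r))) := by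
      refine mul_le_mul h1 (by linarith) ?_ ?_
      · have a1 : (0:ℝ) ≤ (t₃ - s₂) ^ (-(2 * r)) := Real.rpow_nonneg (by linarith) _
        have a2 : (0:ℝ) ≤ (t₂ - s₂) ^ (-(2 * r)) := Real.rpow_nonneg p5.le _
        linarith
      · exact mul_nonneg (Real.rpow_nonneg p1.le _) (Real.rpow_nonneg p2.le _)
    calc ENNReal.ofReal ((t₃ - s₃) ^ (-(2 * r)) *
            ((t₃ - s₂) ^ (-(2 * r)) + (t₂ - s₂) ^ (-(2 * r))))
        ≤ ENNReal.ofReal ((t₁ - s₂) ^ (-r) * ((t₂ - s₃) ^ (-r) *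
            ((t₂ - t₁) ^ (-r) * ((t₃ - t₂) ^ (-r) * 2)))) := by
          refine ENNReal.ofReal_le_ofReal (hprod.trans_eq (by ring))
      _ = ENNReal.ofReal ((t₁ - s₂) ^ (-r)) * (ENNReal.ofReal ((t₂ - s₃) ^ (-r)) *
            (ENNReal.ofReal ((t₂ - t₁) ^ (-r)) *
              (ENNReal.ofReal ((t₃ - t₂) ^ (-r)) * ENNReal.ofReal 2))) := by
          rw [ENNReal.ofReal_mul (Real.rpow_nonneg p4.le _),
            ENNReal.ofReal_mul (Real.rpow_nonneg p2.le _),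
            ENNReal.ofReal_mul (Real.rpow_nonneg p3.le _),
            ENNReal.ofReal_mul (Real.rpow_nonneg p1.le _)]
end
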